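/- arXiv:1311.7544 — 5 statements merged into one kernel-verified Lean document; each statement's English description precedes it below -/
import Mathlib

section
/- Let E be a measurable space, φ : E^k → ℝ bounded measurable, and for N ≥ k let φ̃ denote the symmetrization of φ ⊗ 1^{⊗(N-k)} over all permutations of N coordinates. For V ∈ E^N let μ^N_V = (1/N) Σᵢ δ_{vᵢ} be the empirical measure and R_φ(μ^N_V) = ∫_{E^k} φ d(μ^N_V)^{⊗k}. Then ‖φ̃ - R_φ ∘ μ^N_·‖_{L^∞(E^N)} ≤ (2k²/N) ‖φ‖_{L^∞(E^k)}. -/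
open scoped BigOperators

set_option maxHeartbeats 1000000

private lemma grunbaum_pow_le_aux (N : ℕ) : ∀ k : ℕ, k ≤ N →
    N ^ k ≤ N.descFactorial k + k * k * N ^ (k - 1)
  | 0, _ => by simp
  | k + 1, h => by
    have hk : k ≤ N := (Nat.le_succ k).trans h
    have IH := grunbaum_pow_le_aux N k hk
    have h2 : k * k * (N * N ^ (k - 1)) ≤ k * k * N ^ k := by
      match k with
      | 0 => simp
      | m + 1 =>
        simp only [Nat.add_sub_cancel]
        exact Nat.le_of_eq (by rw [pow_succ]; ring)
    have h3 : N * N.descFactorial k = N.descFactorial (k + 1) + k * N.descFactorial k := by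
      rw [Nat.descFactorial_succ]
      calc N * N.descFactorial k = (N - k + k) * N.descFactorial k := by
            rw [Nat.sub_add_cancel hk]
        _ = _ := by ring
    calc N ^ (k + 1) = N * N ^ k := by rw [pow_succ]; ring
      _ ≤ N * (N.descFactorial k + k * k * N ^ (k - 1)) := Nat.mul_le_mul_left _ IH
      _ = N * N.descFactorial k + k * k * (N * N ^ (k - 1)) := by ring
      _ ≤ N * N.descFactorial k + k * k * N ^ k := Nat.add_le_add_left h2 _
      _ = N.descFactorial (k + 1) + k * N.descFactorial k + k * k * N ^ k := by rw [h3]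
      _ ≤ N.descFactorial (k + 1) + k * N ^ k + k * k * N ^ k := by
          have := Nat.descFactorial_le_pow N k
          have := Nat.mul_le_mul_left k this
          omega
      _ ≤ N.descFactorial (k + 1) + (k + 1) * (k + 1) * N ^ ((k + 1) - 1) := by
          simp only [Nat.add_sub_cancel]
          have : k * N ^ k + k * k * N ^ k ≤ (k + 1) * (k + 1) * N ^ k := by
            have : (k + k * k) * N ^ k ≤ ((k + 1) * (k + 1)) * N ^ k :=
              Nat.mul_le_mul_right _ (by nlinarith)
            calc k * N ^ k + k * k * N ^ k = (k + k * k) * N ^ k := by ring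
              _ ≤ _ := this
          omega

private lemma grunbaum_pow_le (k N : ℕ) (hkN : k ≤ N) :
    N ^ (k + 1) ≤ N * N.descFactorial k + k * k * N ^ k := by
  have h := grunbaum_pow_le_aux N k hkN
  have h2 : k * k * (N * N ^ (k - 1)) ≤ k * k * N ^ k := by
    match k with
    | 0 => simp
    | m + 1 =>
      simp only [Nat.add_sub_cancel]
      exact Nat.le_of_eq (by rw [pow_succ]; ring)
  calc N ^ (k + 1) = N * N ^ k := by rw [pow_succ]; ring
    _ ≤ N * (N.descFactorial k + k * k * N ^ (k - 1)) := Nat.mul_le_mul_left _ h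
    _ = N * N.descFactorial k + k * k * (N * N ^ (k - 1)) := by ring
    _ ≤ _ := Nat.add_le_add_left h2 _

private lemma grunbaum_fiber_card {k N : ℕ} (hkN : k ≤ N)
    (ι : Fin k → Fin N) (hι : Function.Injective ι) :
    (Finset.univ.filter fun σ : Equiv.Perm (Fin N) =>
        (fun i => σ (Fin.castLE hkN i)) = ι).card = (N - k).factorial := by
  classical
  let e1 : {x : Fin N // (x : ℕ) < k} ≃ Fin k :=
    { toFun := fun x => ⟨x.1, x.2⟩
      invFun := fun i => ⟨Fin.castLE hkN i, i.2⟩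
      left_inv := fun x => rfl
      right_inv := fun i => rfl }
  let e : {x : Fin N // (x : ℕ) < k} ≃ {x : Fin N // x ∈ Set.range ι} :=
    e1.trans (Equiv.ofInjective ι hι)
  set σ0 : Equiv.Perm (Fin N) := e.extendSubtype with hσ0def
  have hσ0 : ∀ i : Fin k, σ0 (Fin.castLE hkN i) = ι i := by
    intro i
    have hp : ((Fin.castLE hkN i : Fin N) : ℕ) < k := i.2
    rw [hσ0def, Equiv.extendSubtype_apply_of_mem e _ hp]
    have h1 : e1 ⟨Fin.castLE hkN i, hp⟩ = i := rfl
    show ((e1.trans (Equiv.ofInjective ι hι)) ⟨Fin.castLE hkN i, hp⟩ : Fin N) = ι i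
    rw [Equiv.trans_apply, h1, Equiv.ofInjective_apply]
  -- the equiv between the fiber and permutations fixing the first k coordinates
  let E3 : {σ : Equiv.Perm (Fin N) // (fun i => σ (Fin.castLE hkN i)) = ι} ≃
      {τ : Equiv.Perm (Fin N) // ∀ a : Fin N, ¬ (k ≤ (a : ℕ)) → τ a = a} :=
    { toFun := fun σ => ⟨σ0⁻¹ * σ.1, by
        intro a ha
        push_neg at ha
        have hai : a = Fin.castLE hkN ⟨a, ha⟩ := rfl
        have h2 : σ.1 a = ι ⟨a, ha⟩ := by
          conv_lhs => rw [hai]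
          exact congrFun σ.2 ⟨a, ha⟩
        rw [Equiv.Perm.mul_apply, h2, ← hσ0 ⟨a, ha⟩, Equiv.Perm.inv_def, Equiv.symm_apply_apply, ← hai]⟩
      invFun := fun τ => ⟨σ0 * τ.1, by
        funext i
        have hfix : τ.1 (Fin.castLE hkN i) = Fin.castLE hkN i :=
          τ.2 _ (by simpa using i.2.not_le)
        show σ0 (τ.1 (Fin.castLE hkN i)) = ι i
        rw [hfix, hσ0]⟩
      left_inv := fun σ => Subtype.ext (by group)
      right_inv := fun τ => Subtype.ext (by group) }
  have c1 : Fintype.card {x : Fin N // k ≤ (x : ℕ)} = N - k := by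
    have e4 : {x : Fin N // k ≤ (x : ℕ)} ≃ Fin (N - k) :=
      { toFun := fun x => ⟨(x.1 : ℕ) - k, by have := x.1.isLt; have := x.2; omega⟩
        invFun := fun j => ⟨⟨k + (j : ℕ), by have := j.isLt; omega⟩, by simp⟩
        left_inv := fun x => Subtype.ext (Fin.ext (by have := x.2; simp; omega))
        right_inv := fun j => Fin.ext (by simp) }
    rw [Fintype.card_congr e4, Fintype.card_fin]
  have key : Fintype.card {σ : Equiv.Perm (Fin N) // (fun i => σ (Fin.castLE hkN i)) = ι}
      = (N - k).factorial := by
    rw [Fintype.card_congr E3,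
      Fintype.card_congr (Equiv.Perm.subtypeEquivSubtypePerm
        (fun x : Fin N => k ≤ (x : ℕ))).symm,
      Fintype.card_perm, c1]
  rw [← key, Fintype.card_subtype]

/-- Grunbaum's combinatorial trick: the symmetrization `φ̃` of
`φ ⊗ 1^{⊗(N-k)}` differs from the "polynomial" function
`R_φ(μ^N_V) = N^{-k} Σ_{i₁,...,i_k} φ(v_{i₁},...,v_{i_k})` by at most
`2k²‖φ‖_∞/N` in supremum norm. -/
theorem grunbaum_symmetrization_estimate
    {E : Type*} [MeasurableSpace E] {k N : ℕ} (hkN : k ≤ N) (hN : 1 ≤ N)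
    (φ : (Fin k → E) → ℝ) (hφ : Measurable φ)
    (C : ℝ) (hC : ∀ x, |φ x| ≤ C)
    (V : Fin N → E) :
    |((N.factorial : ℝ))⁻¹
        * ∑ σ : Equiv.Perm (Fin N), φ (fun i => V (σ (Fin.castLE hkN i)))
      - ((N : ℝ) ^ k)⁻¹ * ∑ ι : Fin k → Fin N, φ (fun i => V (ι i))|
      ≤ 2 * (k : ℝ) ^ 2 / N * C := by
  classical
  set D : ℕ := N.descFactorial k with hD
  set S : Finset (Fin k → Fin N) := Finset.univ.filter (fun ι => Function.Injective ι)
    with hSdef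
  have hScard : S.card = D := by
    rw [hSdef, ← Fintype.card_subtype,
      Fintype.card_congr (Equiv.subtypeInjectiveEquivEmbedding (Fin k) (Fin N))]
    simp [Fintype.card_embedding_eq, hD]
  have hstep : ∑ σ : Equiv.Perm (Fin N), φ (fun i => V (σ (Fin.castLE hkN i)))
      = ((N - k).factorial : ℝ) * ∑ ι ∈ S, φ (fun i => V (ι i)) := by
    have h0 := Finset.sum_fiberwise_of_maps_to
      (g := fun σ : Equiv.Perm (Fin N) => fun i => σ (Fin.castLE hkN i))
      (s := Finset.univ) (t := S)
      (fun σ _ => by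
        rw [hSdef]
        simp only [Finset.mem_filter, Finset.mem_univ, true_and]
        exact σ.injective.comp (Fin.castLE_injective hkN))
      (fun σ => φ (fun i => V (σ (Fin.castLE hkN i))))
    rw [← h0, Finset.mul_sum]
    refine Finset.sum_congr rfl (fun ι hι => ?_)
    have hinj : Function.Injective ι := by
      rw [hSdef] at hι
      simpa using hι
    have hcongr : ∀ σ ∈ Finset.univ.filter fun σ : Equiv.Perm (Fin N) =>
        (fun i => σ (Fin.castLE hkN i)) = ι,
        φ (fun i => V (σ (Fin.castLE hkN i))) = φ (fun i => V (ι i)) := by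
      intro σ hσ
      simp only [Finset.mem_filter] at hσ
      congr 1
      funext i
      rw [← hσ.2]
    rw [Finset.sum_congr rfl hcongr, Finset.sum_const,
      grunbaum_fiber_card hkN ι hinj, nsmul_eq_mul]
  set r : ℝ := ∑ ι ∈ S, φ (fun i => V (ι i)) with hr
  set s : ℝ := ∑ ι ∈ Sᶜ, φ (fun i => V (ι i)) with hs
  have htot : ∑ ι : Fin k → Fin N, φ (fun i => V (ι i)) = r + s :=
    (Finset.sum_add_sum_compl S _).symm
  -- numeric facts
  have hDpos : 0 < D := Nat.pos_of_ne_zero fun h =>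
    absurd (Nat.descFactorial_eq_zero_iff_lt.mp h) (not_lt.2 hkN)
  have hDposR : (0 : ℝ) < D := by exact_mod_cast hDpos
  have hNR : (0 : ℝ) < N := by exact_mod_cast hN
  set P : ℝ := (N : ℝ) ^ k with hP
  have hPpos : (0 : ℝ) < P := by positivity
  have hDleP : (D : ℝ) ≤ P := by
    rw [hP, hD]
    exact_mod_cast Nat.descFactorial_le_pow N k
  have hC0 : 0 ≤ C := le_trans (abs_nonneg _) (hC (fun _ => V ⟨0, hN⟩))
  have hmain : (N : ℝ) * P ≤ (N : ℝ) * D + (k : ℝ) * (k : ℝ) * P := by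
    have h := grunbaum_pow_le k N hkN
    have h' : ((N ^ (k + 1) : ℕ) : ℝ) ≤ ((N * N.descFactorial k + k * k * N ^ k : ℕ) : ℝ) := by
      exact_mod_cast h
    push_cast at h'
    rw [pow_succ] at h'
    rw [hP, hD]
    linarith
  -- bounds on r and s
  have hrb : |r| ≤ (D : ℝ) * C := by
    calc |r| ≤ ∑ ι ∈ S, |φ (fun i => V (ι i))| := Finset.abs_sum_le_sum_abs _ _
      _ ≤ ∑ _ι ∈ S, C := Finset.sum_le_sum (fun ι _ => hC _)
      _ = (D : ℝ) * C := by rw [Finset.sum_const, hScard, nsmul_eq_mul]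
  have hScardC : ((Sᶜ : Finset (Fin k → Fin N)).card : ℝ) = P - D := by
    rw [Finset.card_compl, hScard]
    have hcard : Fintype.card (Fin k → Fin N) = N ^ k := by
      simp [Fintype.card_fun]
    rw [hcard, Nat.cast_sub (by exact_mod_cast Nat.descFactorial_le_pow N k)]
    push_cast [hP]
    ring
  have hsb : |s| ≤ (P - (D : ℝ)) * C := by
    calc |s| ≤ ∑ ι ∈ Sᶜ, |φ (fun i => V (ι i))| := Finset.abs_sum_le_sum_abs _ _
      _ ≤ ∑ _ι ∈ Sᶜ, C := Finset.sum_le_sum (fun ι _ => hC _)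
      _ = (P - (D : ℝ)) * C := by rw [Finset.sum_const, nsmul_eq_mul, hScardC]
  -- simplify the permutation average
  have hfact : ((N - k).factorial : ℝ) * (D : ℝ) = (N.factorial : ℝ) := by
    rw [hD]
    exact_mod_cast Nat.factorial_mul_descFactorial hkN
  have hfacpos : (0 : ℝ) < ((N - k).factorial : ℝ) := by
    exact_mod_cast (N - k).factorial_pos
  have h1 : ((N.factorial : ℝ))⁻¹ * (((N - k).factorial : ℝ) * r) = (D : ℝ)⁻¹ * r := by
    rw [← hfact, mul_inv]
    field_simp
  rw [hstep, htot, h1]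
  -- the key estimate
  have hinvle : P⁻¹ ≤ (D : ℝ)⁻¹ := by
    apply inv_anti₀ hDposR hDleP
  have key1 : |(D : ℝ)⁻¹ * r - P⁻¹ * (r + s)|
      ≤ ((D : ℝ)⁻¹ - P⁻¹) * ((D : ℝ) * C) + P⁻¹ * ((P - (D : ℝ)) * C) := by
    have e : (D : ℝ)⁻¹ * r - P⁻¹ * (r + s) = ((D : ℝ)⁻¹ - P⁻¹) * r - P⁻¹ * s := by ring
    rw [e]
    refine (abs_sub _ _).trans ?_
    rw [abs_mul, abs_mul, abs_of_nonneg (sub_nonneg.2 hinvle),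
      abs_of_nonneg (inv_nonneg.2 hPpos.le)]
    exact add_le_add (mul_le_mul_of_nonneg_left hrb (sub_nonneg.2 hinvle))
      (mul_le_mul_of_nonneg_left hsb (inv_nonneg.2 hPpos.le))
  refine key1.trans ?_
  have h2 : ((D : ℝ)⁻¹ - P⁻¹) * ((D : ℝ) * C) = (1 - (D : ℝ) / P) * C := by
    field_simp
  have h3 : P⁻¹ * ((P - (D : ℝ)) * C) = (1 - (D : ℝ) / P) * C := by
    field_simp
    try ring
  rw [h2, h3]
  have h4 : 1 - (D : ℝ) / P ≤ (k : ℝ) ^ 2 / N := by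
    have e : 1 - (D : ℝ) / P = (P - D) / P := by field_simp
    rw [e, div_le_div_iff₀ hPpos hNR]
    nlinarith [hmain]
  have h5 : (1 - (D : ℝ) / P) * C ≤ (k : ℝ) ^ 2 / N * C :=
    mul_le_mul_of_nonneg_right h4 hC0
  have : 2 * (k : ℝ) ^ 2 / N * C = (k : ℝ) ^ 2 / N * C + (k : ℝ) ^ 2 / N * C := by ring
  rw [this]
  exact add_le_add h5 h5
end

section
/- Let G^N be a symmetric probability measure on E^N (invariant under coordinate permutations) and φ : E^k → ℝ bounded measurable, k ≤ N. Then the integral of φ ⊗ 1^{⊗(N-k)} against G^N equals the integral of its symmetrization φ̃ against G^N, and therefore |⟨G^N, φ ⊗ 1^{⊗(N-k)}⟩ - ⟨G^N, R_φ(μ^N_·)⟩| ≤ (2k²/N)‖φ‖_∞. -/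
open MeasureTheory
open scoped BigOperators

lemma exists_perm_extend {n : ℕ} {α : Type*} [Fintype α] [DecidableEq α]
    (f g : Fin n → α) (hf : Function.Injective f) (hg : Function.Injective g) :
    ∃ σ : Equiv.Perm α, ∀ i, σ (f i) = g i := by
  classical
  have hcard : Fintype.card (↥(Set.range f)ᶜ) = Fintype.card (↥(Set.range g)ᶜ) := by
    rw [Fintype.card_compl_set, Fintype.card_compl_set,
      Set.card_range_of_injective hf, Set.card_range_of_injective hg]
  let e1 : Set.range f ≃ Set.range g :=
    (Equiv.ofInjective f hf).symm.trans (Equiv.ofInjective g hg)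
  let e2 : ↥(Set.range f)ᶜ ≃ ↥(Set.range g)ᶜ := Fintype.equivOfCardEq hcard
  refine ⟨(Equiv.sumCompl (· ∈ Set.range f)).symm.trans
    ((e1.sumCongr e2).trans (Equiv.sumCompl (· ∈ Set.range g))), fun i => ?_⟩
  have h1 : (Equiv.sumCompl (· ∈ Set.range f)).symm (f i) = Sum.inl ⟨f i, ⟨i, rfl⟩⟩ :=
    Equiv.sumCompl_symm_apply_of_pos ⟨i, rfl⟩
  have h2 : e1 ⟨f i, ⟨i, rfl⟩⟩ = ⟨g i, ⟨i, rfl⟩⟩ := by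
    simp only [e1, Equiv.trans_apply]
    have : (⟨f i, ⟨i, rfl⟩⟩ : Set.range f) = Equiv.ofInjective f hf i := rfl
    rw [this, Equiv.symm_apply_apply]
    rfl
  rw [Equiv.trans_apply, Equiv.trans_apply, h1]
  show (Equiv.sumCompl (· ∈ Set.range g)) (Sum.inl (e1 ⟨f i, ⟨i, rfl⟩⟩)) = g i
  rw [h2, Equiv.sumCompl_apply_inl]

lemma count_est (N : ℕ) : ∀ k ≤ N, (N : ℝ) * ((N : ℝ) ^ k - N.descFactorial k) ≤ k ^ 2 * N ^ k := by
  intro k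
  induction k with
  | zero => simp
  | succ k ih =>
    intro hk
    have hk' : k ≤ N := Nat.le_of_succ_le hk
    have ih' := ih hk'
    have hd : (N.descFactorial k : ℝ) ≤ (N : ℝ) ^ k := by
      exact_mod_cast Nat.descFactorial_le_pow N k
    have hdesc : (N.descFactorial (k + 1) : ℝ) = ((N : ℝ) - k) * N.descFactorial k := by
      rw [Nat.descFactorial_succ]
      push_cast [Nat.cast_sub hk']
      ring
    have hN0 : (0 : ℝ) ≤ N := Nat.cast_nonneg N
    have hd0 : (0 : ℝ) ≤ N.descFactorial k := Nat.cast_nonneg _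
    have hk0 : (0 : ℝ) ≤ k := Nat.cast_nonneg k
    have hp0 : (0 : ℝ) ≤ (N : ℝ) ^ k := by positivity
    rw [hdesc]
    push_cast
    simp only [pow_succ]
    nlinarith [mul_le_mul_of_nonneg_left ih' hN0, mul_le_mul_of_nonneg_left hd (mul_nonneg hN0 hk0),
      mul_nonneg hk0 hp0]

/-- For a symmetric probability measure `G^N` on `E^N`, the integral of
`φ ⊗ 1^{⊗(N-k)}` equals the integral of its symmetrization `φ̃`, and
therefore `|⟨G^N, φ ⊗ 1^{⊗(N-k)}⟩ - ⟨G^N, R_φ(μ^N_·)⟩| ≤ 2k²‖φ‖_∞/N`. -/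
theorem symmetric_measure_grunbaum_estimate
    {E : Type*} [MeasurableSpace E] {k N : ℕ} (hkN : k ≤ N) (hN : 1 ≤ N)
    (G : Measure (Fin N → E)) [IsProbabilityMeasure G]
    (hsym : ∀ σ : Equiv.Perm (Fin N),
      Measure.map (fun V : Fin N → E => fun i => V (σ i)) G = G)
    (φ : (Fin k → E) → ℝ) (hφ : Measurable φ)
    (C : ℝ) (hC : ∀ x, |φ x| ≤ C) :
    (∫ V, φ (fun i => V (Fin.castLE hkN i)) ∂G
        = ∫ V, ((N.factorial : ℝ))⁻¹
            * ∑ σ : Equiv.Perm (Fin N), φ (fun i => V (σ (Fin.castLE hkN i))) ∂G)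
    ∧
    |∫ V, φ (fun i => V (Fin.castLE hkN i)) ∂G
        - ∫ V, ((N : ℝ) ^ k)⁻¹ * ∑ ι : Fin k → Fin N, φ (fun i => V (ι i)) ∂G|
      ≤ 2 * (k : ℝ) ^ 2 / N * C := by
  classical
  -- nonemptiness and C ≥ 0
  have hne : Nonempty (Fin N → E) := by
    by_contra h
    have h0 : (Set.univ : Set (Fin N → E)) = ∅ := Set.univ_eq_empty_iff.2 (not_nonempty_iff.1 h)
    have := measure_univ (μ := G)
    rw [h0, measure_empty] at this
    simp at this
  have hE : Nonempty E := ⟨(Classical.choice hne) ⟨0, hN⟩⟩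
  have hC0 : 0 ≤ C := le_trans (abs_nonneg _) (hC fun _ => Classical.choice hE)
  -- basic measurability / integrability
  have hmeas : ∀ ι : Fin k → Fin N, Measurable (fun V : Fin N → E => φ (fun i => V (ι i))) :=
    fun ι => hφ.comp (measurable_pi_lambda _ fun i => measurable_pi_apply _)
  have hint : ∀ ι : Fin k → Fin N, Integrable (fun V : Fin N → E => φ (fun i => V (ι i))) G := by
    intro ι
    refine Integrable.mono' (integrable_const C) (hmeas ι).aestronglyMeasurable ?_
    exact Filter.Eventually.of_forall fun V => hC _
  have habs : ∀ ι : Fin k → Fin N, |∫ V, φ (fun i => V (ι i)) ∂G| ≤ C := by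
    intro ι
    have := norm_integral_le_of_norm_le_const (μ := G)
      (f := fun V : Fin N → E => φ (fun i => V (ι i))) (C := C)
      (Filter.Eventually.of_forall fun V => hC _)
    simpa using this
  set I := ∫ V, φ (fun i => V (Fin.castLE hkN i)) ∂G with hI
  -- key symmetry fact
  have key : ∀ σ : Equiv.Perm (Fin N),
      ∫ V, φ (fun i => V (σ (Fin.castLE hkN i))) ∂G = I := by
    intro σ
    have hT : Measurable (fun V : Fin N → E => fun i => V (σ i)) :=
      measurable_pi_lambda _ fun i => measurable_pi_apply _
    have := integral_map (μ := G) hT.aemeasurable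
      (hmeas (Fin.castLE hkN)).aestronglyMeasurable
    rw [hsym σ] at this
    exact this.symm
  -- injective tuples give I
  have keyinj : ∀ ι : Fin k → Fin N, Function.Injective ι →
      ∫ V, φ (fun i => V (ι i)) ∂G = I := by
    intro ι hι
    obtain ⟨σ, hσ⟩ := exists_perm_extend (Fin.castLE hkN) ι (Fin.castLE_injective hkN) hι
    have heq : (fun V : Fin N → E => φ (fun i => V (ι i)))
        = fun V => φ (fun i => V (σ (Fin.castLE hkN i))) := by
      funext V; congr 1; funext i; rw [hσ i]
    rw [heq]; exact key σ
  constructor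
  · -- part 1
    have h1 : ∫ V, ((N.factorial : ℝ))⁻¹
          * ∑ σ : Equiv.Perm (Fin N), φ (fun i => V (σ (Fin.castLE hkN i))) ∂G
        = ((N.factorial : ℝ))⁻¹
          * ∑ σ : Equiv.Perm (Fin N), ∫ V, φ (fun i => V (σ (Fin.castLE hkN i))) ∂G := by
      rw [integral_const_mul, integral_finset_sum]
      exact fun σ _ => hint fun i => σ (Fin.castLE hkN i)
    rw [h1]
    have h2 : ∑ σ : Equiv.Perm (Fin N), ∫ V, φ (fun i => V (σ (Fin.castLE hkN i))) ∂G
        = (N.factorial : ℝ) * I := by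
      rw [Finset.sum_congr rfl fun σ _ => key σ, Finset.sum_const, Finset.card_univ,
        Fintype.card_perm, Fintype.card_fin, nsmul_eq_mul]
    rw [h2, ← mul_assoc, inv_mul_cancel₀ (by exact_mod_cast N.factorial_ne_zero), one_mul]
  · -- part 2
    have hS : ∫ V, ((N : ℝ) ^ k)⁻¹ * ∑ ι : Fin k → Fin N, φ (fun i => V (ι i)) ∂G
        = ((N : ℝ) ^ k)⁻¹ * ∑ ι : Fin k → Fin N, ∫ V, φ (fun i => V (ι i)) ∂G := by
      rw [integral_const_mul, integral_finset_sum]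
      exact fun ι _ => hint ι
    rw [hS]
    set J : (Fin k → Fin N) → ℝ := fun ι => ∫ V, φ (fun i => V (ι i)) ∂G with hJ
    have hcardfun : (Fintype.card (Fin k → Fin N) : ℝ) = (N : ℝ) ^ k := by
      rw [Fintype.card_fun, Fintype.card_fin, Fintype.card_fin]; push_cast; ring
    have hNk : (0 : ℝ) < (N : ℝ) ^ k := by positivity
    have hdiff : I - ((N : ℝ) ^ k)⁻¹ * ∑ ι : Fin k → Fin N, J ι
        = ((N : ℝ) ^ k)⁻¹ * ∑ ι : Fin k → Fin N, (I - J ι) := by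
      rw [Finset.sum_sub_distrib, Finset.sum_const, Finset.card_univ, nsmul_eq_mul, mul_sub,
        ← mul_assoc, hcardfun]
      rw [inv_mul_cancel₀ (ne_of_gt hNk), one_mul]
    rw [hdiff, abs_mul, abs_inv, abs_of_pos hNk]
    -- bound the sum
    have hsum : |∑ ι : Fin k → Fin N, (I - J ι)|
        ≤ ((N : ℝ) ^ k - N.descFactorial k) * (2 * C) := by
      set s : Finset (Fin k → Fin N) :=
        Finset.univ.filter (fun ι => ¬ Function.Injective ι) with hs
      have hzero : ∀ ι : Fin k → Fin N, Function.Injective ι → I - J ι = 0 := by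
        intro ι h
        have := keyinj ι h
        simp only [hJ, this, sub_self]
      have hsplit : ∑ ι : Fin k → Fin N, (I - J ι) = ∑ ι ∈ s, (I - J ι) := by
        rw [hs]
        refine (Finset.sum_filter_of_ne ?_).symm
        intro ι _ hne hinj
        exact hne (hzero ι hinj)
      have hb : ∀ ι ∈ s, |I - J ι| ≤ 2 * C := by
        intro ι _
        have h1 : |I| ≤ C := habs (Fin.castLE hkN)
        have h2 : |J ι| ≤ C := habs ι
        have h3 : |I - J ι| ≤ |I| + |J ι| := abs_sub _ _
        linarith
      have h4 : ∑ ι ∈ s, |I - J ι| ≤ ∑ ι ∈ s, (2 * C) := Finset.sum_le_sum hb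
      have h5 : (∑ ι ∈ s, (2 * C)) = (s.card : ℝ) * (2 * C) := by
        rw [Finset.sum_const, nsmul_eq_mul]
      have hcard : (s.card : ℝ) ≤ (N : ℝ) ^ k - N.descFactorial k := by
        have hcinj : (Finset.univ.filter (fun ι : Fin k → Fin N => Function.Injective ι)).card
            = N.descFactorial k := by
          rw [← Fintype.card_subtype]
          rw [Fintype.card_congr (Equiv.subtypeInjectiveEquivEmbedding (Fin k) (Fin N))]
          rw [Fintype.card_embedding_eq, Fintype.card_fin, Fintype.card_fin]
        have htot := Finset.card_filter_add_card_filter_not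
          (s := (Finset.univ : Finset (Fin k → Fin N)))
          (p := fun ι => Function.Injective ι)
        rw [Finset.card_univ, Fintype.card_fun, Fintype.card_fin, Fintype.card_fin, hcinj] at htot
        have hcast := congrArg (fun n : ℕ => (n : ℝ)) htot
        push_cast at hcast
        have hss : (s.card : ℝ)
            = ((Finset.univ.filter (fun ι : Fin k → Fin N => ¬ Function.Injective ι)).card : ℝ) :=
          by rw [hs]
        rw [hss]
        linarith
      calc |∑ ι : Fin k → Fin N, (I - J ι)| = |∑ ι ∈ s, (I - J ι)| := by rw [hsplit]
        _ ≤ ∑ ι ∈ s, |I - J ι| := Finset.abs_sum_le_sum_abs _ _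
        _ ≤ (s.card : ℝ) * (2 * C) := by rw [← h5]; exact h4
        _ ≤ ((N : ℝ) ^ k - N.descFactorial k) * (2 * C) :=
            mul_le_mul_of_nonneg_right hcard (by linarith)
      -- final arithmetic
    have hNpos : (0 : ℝ) < N := by exact_mod_cast hN
    have hce := count_est N k hkN
    have frac : ((N : ℝ) ^ k)⁻¹ * (((N : ℝ) ^ k - N.descFactorial k) * (2 * C))
        ≤ 2 * (k : ℝ) ^ 2 / N * C := by
      have h2C : (0 : ℝ) ≤ 2 * C := by linarith
      have frac1 : ((N : ℝ) ^ k)⁻¹ * ((N : ℝ) ^ k - N.descFactorial k) ≤ (k : ℝ) ^ 2 / N := by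
        rw [inv_mul_le_iff₀ hNk, ← mul_div_assoc, le_div_iff₀ hNpos]
        nlinarith [hce]
      have := mul_le_mul_of_nonneg_right frac1 h2C
      calc ((N : ℝ) ^ k)⁻¹ * (((N : ℝ) ^ k - N.descFactorial k) * (2 * C))
          = ((N : ℝ) ^ k)⁻¹ * ((N : ℝ) ^ k - N.descFactorial k) * (2 * C) := by ring
        _ ≤ (k : ℝ) ^ 2 / N * (2 * C) := this
        _ = 2 * (k : ℝ) ^ 2 / N * C := by ring
    calc ((N : ℝ) ^ k)⁻¹ * |∑ ι : Fin k → Fin N, (I - J ι)|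
        ≤ ((N : ℝ) ^ k)⁻¹ * (((N : ℝ) ^ k - N.descFactorial k) * (2 * C)) :=
          mul_le_mul_of_nonneg_left hsum (le_of_lt (inv_pos.2 hNk))
      _ ≤ 2 * (k : ℝ) ^ 2 / N * C := frac
end

section
/- Normalized relative entropy is superadditive over marginals for symmetric measures: if G ∈ P_sym(E^N) and 1 ≤ j ≤ N, then the j-th marginal satisfies (1/j) H(G_j | γ^{⊗j}) ≤ (1/N) H(G | γ^{⊗N}), where H denotes unnormalized relative entropy. -/
open MeasureTheory
open scoped BigOperators ENNReal

/-- Relative entropy `H(μ|ν) = ∫ log(dμ/dν) dμ`. -/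
noncomputable def Hrel {α : Type*} [MeasurableSpace α] (μ ν : Measure α) : ℝ :=
  ∫ x, Real.log ((μ.rnDeriv ν x).toReal) ∂μ

section Aux

variable {E : Type*} [MeasurableSpace E]

lemma aux_pt (a : ℝ≥0∞) : a * ENNReal.ofReal (-(Real.log a.toReal)) ≤ 1 := by
  rcases eq_or_ne a ∞ with rfl | ha
  · simp
  · set t := a.toReal with htdef
    have ht : 0 ≤ t := ENNReal.toReal_nonneg
    rcases le_or_gt (-(Real.log t)) 0 with hneg | hpos
    · rw [ENNReal.ofReal_of_nonpos hneg]; simp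
    · have htpos : 0 < t := by
        rcases eq_or_lt_of_le ht with h0 | h0
        · exfalso; rw [← h0] at hpos; simp at hpos
        · exact h0
      have ha' : a = ENNReal.ofReal t := (ENNReal.ofReal_toReal ha).symm
      rw [ha', ← ENNReal.ofReal_mul ht]
      have : t * -(Real.log t) ≤ 1 := by
        have h1 : Real.log t⁻¹ ≤ t⁻¹ - 1 := Real.log_le_sub_one_of_pos (by positivity)
        rw [Real.log_inv] at h1
        have := mul_le_mul_of_nonneg_left h1 ht
        rw [mul_sub, mul_inv_cancel₀ htpos.ne'] at this
        nlinarith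
      calc ENNReal.ofReal (t * -(Real.log t)) ≤ ENNReal.ofReal 1 :=
            ENNReal.ofReal_le_ofReal this
        _ = 1 := ENNReal.ofReal_one

lemma lintegral_ofReal_neg_llr_le {α : Type*} [MeasurableSpace α] (μ ν : Measure α)
    [IsProbabilityMeasure μ] [IsProbabilityMeasure ν] (h : μ ≪ ν) :
    ∫⁻ x, ENNReal.ofReal (-(llr μ ν x)) ∂μ ≤ 1 := by
  have hμ : ν.withDensity (μ.rnDeriv ν) = μ := Measure.withDensity_rnDeriv_eq μ ν h
  have hmeas : Measurable fun x => ENNReal.ofReal (-(llr μ ν x)) :=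
    ((measurable_llr μ ν).neg).ennreal_ofReal
  calc ∫⁻ x, ENNReal.ofReal (-(llr μ ν x)) ∂μ
      = ∫⁻ x, (μ.rnDeriv ν * fun x => ENNReal.ofReal (-(llr μ ν x))) x ∂ν := by
        rw [← lintegral_withDensity_eq_lintegral_mul ν (Measure.measurable_rnDeriv μ ν) hmeas,
          hμ]
    _ ≤ ∫⁻ _, 1 ∂ν := lintegral_mono fun x => aux_pt _
    _ = 1 := by simp


lemma marg_density {n : ℕ} (γ : Measure E) [IsProbabilityMeasure γ]
    (f : (Fin (n+1) → E) → ℝ≥0∞) (hf : Measurable f) (i : Fin (n+1)) :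
    Measure.map (fun (x : Fin (n+1) → E) (j : Fin n) => x (i.succAbove j))
        ((Measure.pi fun _ : Fin (n+1) => γ).withDensity f)
      = (Measure.pi fun _ : Fin n => γ).withDensity
          (fun z => ∫⁻ y, f (i.insertNth y z) ∂γ) := by
  set ν1 := Measure.pi fun _ : Fin (n+1) => γ with hν1
  set ν0 := Measure.pi fun _ : Fin n => γ with hν0
  set T := MeasurableEquiv.piFinSuccAbove (fun _ : Fin (n+1) => E) i with hT
  have hTmp : MeasurePreserving T ν1 (γ.prod ν0) :=
    measurePreserving_piFinSuccAbove (fun _ => γ) i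
  set π : (Fin (n+1) → E) → (Fin n → E) := fun x j => x (i.succAbove j) with hπdef
  have hπ : Measurable π := measurable_pi_lambda _ fun j => measurable_pi_apply _
  have hins : Measurable (fun p : E × (Fin n → E) => f (i.insertNth p.1 p.2)) :=
    hf.comp (MeasurableEquiv.measurable T.symm)
  have hg : Measurable (fun z : Fin n → E => ∫⁻ y, f (i.insertNth y z) ∂γ) := by
    apply Measurable.lintegral_prod_right'
      (f := fun p : (Fin n → E) × E => f (i.insertNth p.2 p.1))
    exact hins.comp (measurable_snd.prodMk measurable_fst)
  ext s hs
  rw [Measure.map_apply hπ hs, withDensity_apply _ (hπ hs), withDensity_apply _ hs,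
      ← lintegral_indicator (hπ hs), ← lintegral_indicator hs]
  have hind : Measurable (Set.indicator (π ⁻¹' s) f) := hf.indicator (hπ hs)
  have key : ∫⁻ x, Set.indicator (π ⁻¹' s) f x ∂ν1
      = ∫⁻ p, Set.indicator (π ⁻¹' s) f (T.symm p) ∂(γ.prod ν0) :=
    (hTmp.symm T).lintegral_comp hind |>.symm
  rw [key, lintegral_prod_symm (fun p : E × (Fin n → E) => Set.indicator (π ⁻¹' s) f (T.symm p))
    ((hind.comp (MeasurableEquiv.measurable T.symm)).aemeasurable)]
  congr 1
  funext z
  by_cases hz : z ∈ s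
  · rw [Set.indicator_of_mem hz]
    have : ∀ y : E, Set.indicator (π ⁻¹' s) f (T.symm (y, z)) = f (i.insertNth y z) := by
      intro y
      apply Set.indicator_of_mem
      show π (T.symm (y, z)) ∈ s
      have : π (T.symm (y, z)) = z := by
        funext j
        simp only [hπdef, hT, MeasurableEquiv.piFinSuccAbove, MeasurableEquiv.symm,
          MeasurableEquiv.coe_mk, Equiv.symm_symm, Fin.insertNthEquiv_apply,
          Fin.insertNth_apply_succAbove]
      rwa [this]
    simp_rw [this]
  · rw [Set.indicator_of_notMem hz]
    have : ∀ y : E, Set.indicator (π ⁻¹' s) f (T.symm (y, z)) = 0 := by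
      intro y
      apply Set.indicator_of_notMem
      show ¬ π (T.symm (y, z)) ∈ s
      have : π (T.symm (y, z)) = z := by
        funext j
        simp only [hπdef, hT, MeasurableEquiv.piFinSuccAbove, MeasurableEquiv.symm,
          MeasurableEquiv.coe_mk, Equiv.symm_symm, Fin.insertNthEquiv_apply,
          Fin.insertNth_apply_succAbove]
      rwa [this]
    simp_rw [this, lintegral_zero]

lemma marg_pi {n : ℕ} (γ : Measure E) [IsProbabilityMeasure γ] (i : Fin (n+1)) :
    Measure.map (fun (x : Fin (n+1) → E) (j : Fin n) => x (i.succAbove j))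
        (Measure.pi fun _ : Fin (n+1) => γ)
      = (Measure.pi fun _ : Fin n => γ) := by
  have hTmp : MeasurePreserving (MeasurableEquiv.piFinSuccAbove (fun _ : Fin (n+1) => E) i)
      (Measure.pi fun _ : Fin (n+1) => γ) (γ.prod (Measure.pi fun _ : Fin n => γ)) :=
    measurePreserving_piFinSuccAbove (fun _ => γ) i
  have : (fun (x : Fin (n+1) → E) (j : Fin n) => x (i.succAbove j))
      = Prod.snd ∘ (MeasurableEquiv.piFinSuccAbove (fun _ : Fin (n+1) => E) i) := rfl
  rw [this, ← Measure.map_map measurable_snd (MeasurableEquiv.measurable _), hTmp.map_eq]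
  exact Measure.snd_prod


lemma han_step {n : ℕ} (hn : 1 ≤ n) (γ : Measure E) [IsProbabilityMeasure γ]
    (G : Measure (Fin (n+1) → E)) [IsProbabilityMeasure G]
    (hsym : ∀ σ : Equiv.Perm (Fin (n+1)),
      Measure.map (fun V : Fin (n+1) → E => fun i => V (σ i)) G = G)
    (hac : G ≪ Measure.pi fun _ : Fin (n+1) => γ)
    (hint : Integrable (llr G (Measure.pi fun _ : Fin (n+1) => γ)) G) :
    Measure.map (fun (x : Fin (n+1) → E) (i : Fin n) => x i.castSucc) G
        ≪ (Measure.pi fun _ : Fin n => γ)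
    ∧ Integrable (llr (Measure.map (fun (x : Fin (n+1) → E) (i : Fin n) => x i.castSucc) G)
        (Measure.pi fun _ : Fin n => γ))
        (Measure.map (fun (x : Fin (n+1) → E) (i : Fin n) => x i.castSucc) G)
    ∧ ((n : ℝ) + 1) * Hrel (Measure.map (fun (x : Fin (n+1) → E) (i : Fin n) => x i.castSucc) G)
        (Measure.pi fun _ : Fin n => γ)
      ≤ (n : ℝ) * Hrel G (Measure.pi fun _ : Fin (n+1) => γ) := by
  have hnR : (0:ℝ) < (n:ℝ) := by exact_mod_cast hn
  set ν1 := Measure.pi fun _ : Fin (n+1) => γ with hν1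
  set ν0 := Measure.pi fun _ : Fin n => γ with hν0
  set f := G.rnDeriv ν1 with hfdef
  have hf : Measurable f := Measure.measurable_rnDeriv G ν1
  have hGf : ν1.withDensity f = G := Measure.withDensity_rnDeriv_eq G ν1 hac
  set π : Fin (n+1) → (Fin (n+1) → E) → (Fin n → E) :=
    fun i x j => x (i.succAbove j) with hπdef
  have hπ : ∀ i, Measurable (π i) :=
    fun i => measurable_pi_lambda _ fun j => measurable_pi_apply _
  set g : Fin (n+1) → (Fin n → E) → ℝ≥0∞ :=
    fun i z => ∫⁻ y, f (i.insertNth y z) ∂γ with hgdef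
  have hg : ∀ i, Measurable (g i) := by
    intro i
    apply Measurable.lintegral_prod_right'
      (f := fun p : (Fin n → E) × E => f (i.insertNth p.2 p.1))
    exact (hf.comp (MeasurableEquiv.measurable
      (MeasurableEquiv.piFinSuccAbove (fun _ : Fin (n+1) => E) i).symm)).comp
      (measurable_snd.prodMk measurable_fst)
  have hmapg : ∀ i, Measure.map (π i) G = ν0.withDensity (g i) := by
    intro i
    conv_lhs => rw [← hGf]
    exact marg_density γ f hf i
  -- all one-coordinate marginals agree by symmetry
  have hmarg : ∀ i, Measure.map (π i) G = Measure.map (π (Fin.last n)) G := by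
    intro i
    set σ : Equiv.Perm (Fin (n+1)) :=
      (finSuccEquiv' (Fin.last n)).trans (finSuccEquiv' i).symm with hσdef
    have hσ : ∀ j : Fin n, σ (Fin.castSucc j) = i.succAbove j := by
      intro j
      simp only [hσdef, Equiv.trans_apply]
      rw [← Fin.succAbove_last, finSuccEquiv'_succAbove, finSuccEquiv'_symm_some]
    have hcomp : π i = (π (Fin.last n)) ∘ (fun V : Fin (n+1) → E => fun k => V (σ k)) := by
      funext x j
      simp only [Function.comp_apply, hπdef, Fin.succAbove_last]
      rw [hσ j]
    have hactm : Measurable (fun V : Fin (n+1) → E => fun k => V (σ k)) :=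
      measurable_pi_lambda _ fun k => measurable_pi_apply _
    rw [hcomp, ← Measure.map_map (hπ _) hactm, hsym σ]
  have hπlast : (fun (x : Fin (n+1) → E) (i : Fin n) => x i.castSucc) = π (Fin.last n) := by
    funext x j
    simp only [hπdef, Fin.succAbove_last]
  rw [hπlast]
  set Gm := Measure.map (π (Fin.last n)) G with hGm
  haveI : IsProbabilityMeasure Gm := Measure.isProbabilityMeasure_map (hπ _).aemeasurable
  have hGmd : ∀ i, Gm = ν0.withDensity (g i) := fun i => by rw [← hmarg i, hmapg i]
  have hGmac : Gm ≪ ν0 := by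
    rw [hGmd (Fin.last n)]; exact withDensity_absolutelyContinuous _ _
  have hrd : ∀ i, g i =ᵐ[ν0] Gm.rnDeriv ν0 := fun i => by
    rw [hGmd i]; exact (Measure.rnDeriv_withDensity ν0 (hg i)).symm
  have hllr : ∀ i, (fun z => Real.log (g i z).toReal) =ᵐ[Gm] llr Gm ν0 := by
    intro i
    filter_upwards [hGmac.ae_le (hrd i)] with z hz
    simp only [llr_def, hz]
  -- a.e. positivity / finiteness
  have hfpos : ∀ᵐ x ∂G, 0 < f x := Measure.rnDeriv_pos hac
  have hffin : ∀ᵐ x ∂G, f x < ∞ := hac.ae_le (Measure.rnDeriv_lt_top G ν1)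
  have hmap_pb : ∀ (i : Fin (n+1)) (p : (Fin n → E) → Prop), MeasurableSet {z | p z} →
      (∀ᵐ z ∂Gm, p z) → (∀ᵐ x ∂G, p (π i x)) := by
    intro i p hpm hp
    rw [← hmarg i] at hp
    exact (ae_map_iff (hπ i).aemeasurable hpm).1 hp
  have hgpos : ∀ i, ∀ᵐ x ∂G, 0 < g i (π i x) := by
    intro i
    apply hmap_pb i (fun z => 0 < g i z) (measurableSet_lt measurable_const (hg i))
    filter_upwards [Measure.rnDeriv_pos hGmac, hGmac.ae_le (hrd i)] with z h1 h2
    rw [h2]; exact h1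
  have hgfin : ∀ i, ∀ᵐ x ∂G, g i (π i x) < ∞ := by
    intro i
    apply hmap_pb i (fun z => g i z < ∞) (measurableSet_lt (hg i) measurable_const)
    filter_upwards [hGmac.ae_le (Measure.rnDeriv_lt_top Gm ν0), hGmac.ae_le (hrd i)] with z h1 h2
    rw [h2]; exact h1
  -- pointwise identification with the grid-lines integrand
  have hfm : ∀ (i : Fin (n+1)) (x : Fin (n+1) → E),
      g i (π i x) = ∫⁻ y, f (Function.update x i y) ∂γ := by
    intro i x
    simp only [hgdef]
    congr 1
    funext y
    exact congrArg f (Fin.insertNth_removeNth i y x)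
  -- the grid-lines (Loomis-Whitney) estimate
  set p : ℝ := 1/(n:ℝ) with hp
  have hp0 : (0:ℝ) ≤ p := by positivity
  have hgrid : ∫⁻ x, ∏ i : Fin (n+1), (g i (π i x)) ^ p ∂ν1 ≤ 1 := by
    have hone : ∫⁻ x, f x ∂ν1 = 1 := by
      rw [hfdef, Measure.lintegral_rnDeriv hac]; exact measure_univ
    have hcard : ((Fintype.card (Fin (n+1)) : ℝ) - 1) * p ≤ 1 := by
      rw [Fintype.card_fin, hp]
      push_cast
      rw [add_sub_cancel_right]
      rw [mul_one_div, div_self hnR.ne']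
    have h0 := lintegral_mul_prod_lintegral_pow_le (fun _ : Fin (n+1) => γ)
      (p := p) hp0 hcard hf
    have hexp0 : (1 - ((Fintype.card (Fin (n+1)) : ℝ) - 1) * p) = 0 := by
      rw [Fintype.card_fin, hp]
      push_cast
      rw [add_sub_cancel_right, mul_one_div, div_self hnR.ne']
      ring
    rw [hexp0, hone, ENNReal.one_rpow] at h0
    simp only [ENNReal.rpow_zero, one_mul] at h0
    calc ∫⁻ x, ∏ i : Fin (n+1), (g i (π i x)) ^ p ∂ν1
        = ∫⁻ x, ∏ i : Fin (n+1), (∫⁻ y, f (Function.update x i y) ∂γ) ^ p ∂ν1 := by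
          apply lintegral_congr
          intro x
          exact Finset.prod_congr rfl fun i _ => by rw [hfm i x]
      _ ≤ 1 := h0
  -- mass computations
  have hBi : ∀ i, ∫⁻ x, g i (π i x) ∂ν1 = 1 := by
    intro i
    have h1 : ∫⁻ x, g i (π i x) ∂ν1 = ∫⁻ z, g i z ∂(Measure.map (π i) ν1) := by
      rw [lintegral_map (hg i) (hπ i)]
    have h2 : Measure.map (π i) ν1 = ν0 := marg_pi γ i
    rw [h1, h2]
    have h3 : ∫⁻ z, g i z ∂ν0 = Gm Set.univ := by
      rw [hGmd i, withDensity_apply _ MeasurableSet.univ, setLIntegral_univ]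
    rw [h3]; exact measure_univ
  have hfrac : ∀ i, ∫⁻ x, g i (π i x) / f x ∂G ≤ 1 := by
    intro i
    have hmeasq : Measurable fun x => g i (π i x) / f x := (((hg i).comp (hπ i)).div hf)
    have h1 : ∫⁻ x, g i (π i x) / f x ∂G = ∫⁻ x, (f * fun x => g i (π i x) / f x) x ∂ν1 := by
      rw [← lintegral_withDensity_eq_lintegral_mul ν1 hf hmeasq, hGf]
    rw [h1]
    calc ∫⁻ x, (f * fun x => g i (π i x) / f x) x ∂ν1
        ≤ ∫⁻ x, g i (π i x) ∂ν1 := lintegral_mono fun x => ENNReal.mul_div_le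
      _ = 1 := hBi i
  -- positive part of llr of the marginal
  have hofReal_llr : ∫⁻ x, ENNReal.ofReal (llr G ν1 x) ∂G < ∞ := by
    have h1 : ∫⁻ x, (‖llr G ν1 x‖₊ : ℝ≥0∞) ∂G < ∞ := hint.2
    refine lt_of_le_of_lt (lintegral_mono fun x => ?_) h1
    rw [← enorm_eq_nnnorm, Real.enorm_eq_ofReal_abs]
    exact ENNReal.ofReal_le_ofReal (le_abs_self _)
  have hposGm : ∫⁻ z, ENNReal.ofReal (llr Gm ν0 z) ∂Gm < ∞ := by
    have hmm : Measurable fun z => ENNReal.ofReal (llr Gm ν0 z) :=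
      (measurable_llr _ _).ennreal_ofReal
    have h2 : ∫⁻ z, ENNReal.ofReal (llr Gm ν0 z) ∂Gm
        = ∫⁻ x, ENNReal.ofReal (llr Gm ν0 (π (Fin.last n) x)) ∂G := by
      rw [hGm, lintegral_map hmm (hπ _)]
    rw [h2]
    have hpull : ∀ᵐ x ∂G, llr Gm ν0 (π (Fin.last n) x)
        = Real.log (g (Fin.last n) (π (Fin.last n) x)).toReal := by
      apply hmap_pb (Fin.last n)
        (fun z => llr Gm ν0 z = Real.log (g (Fin.last n) z).toReal)
      · exact measurableSet_eq_fun (measurable_llr _ _)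
          (Real.measurable_log.comp (hg _).ennreal_toReal)
      · exact (hllr (Fin.last n)).symm
    have hb : ∀ᵐ x ∂G, ENNReal.ofReal (llr Gm ν0 (π (Fin.last n) x))
        ≤ ENNReal.ofReal (llr G ν1 x) + g (Fin.last n) (π (Fin.last n) x) / f x := by
      filter_upwards [hpull, hfpos, hffin, hgpos (Fin.last n), hgfin (Fin.last n)]
        with x h1 h2 h3 h4 h5
      rw [h1]
      have hfa : (0:ℝ) < (f x).toReal := ENNReal.toReal_pos h2.ne' h3.ne
      have hga : (0:ℝ) < (g (Fin.last n) (π (Fin.last n) x)).toReal :=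
        ENNReal.toReal_pos h4.ne' h5.ne
      have hsplit : Real.log (g (Fin.last n) (π (Fin.last n) x)).toReal
          = llr G ν1 x + Real.log ((g (Fin.last n) (π (Fin.last n) x)).toReal / (f x).toReal) := by
        rw [llr]
        rw [Real.log_div hga.ne' hfa.ne']
        ring
      rw [hsplit]
      refine le_trans ENNReal.ofReal_add_le (add_le_add le_rfl ?_)
      have hlog : Real.log ((g (Fin.last n) (π (Fin.last n) x)).toReal / (f x).toReal)
          ≤ (g (Fin.last n) (π (Fin.last n) x)).toReal / (f x).toReal := by
        have := Real.log_le_sub_one_of_pos (div_pos hga hfa)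
        linarith
      calc ENNReal.ofReal (Real.log ((g (Fin.last n) (π (Fin.last n) x)).toReal / (f x).toReal))
          ≤ ENNReal.ofReal ((g (Fin.last n) (π (Fin.last n) x)).toReal / (f x).toReal) :=
            ENNReal.ofReal_le_ofReal hlog
        _ = g (Fin.last n) (π (Fin.last n) x) / f x := by
            rw [ENNReal.ofReal_div_of_pos hfa, ENNReal.ofReal_toReal h5.ne,
              ENNReal.ofReal_toReal h3.ne]
    calc ∫⁻ x, ENNReal.ofReal (llr Gm ν0 (π (Fin.last n) x)) ∂G
        ≤ ∫⁻ x, (ENNReal.ofReal (llr G ν1 x) + g (Fin.last n) (π (Fin.last n) x) / f x) ∂G :=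
          lintegral_mono_ae hb
      _ = ∫⁻ x, ENNReal.ofReal (llr G ν1 x) ∂G
          + ∫⁻ x, g (Fin.last n) (π (Fin.last n) x) / f x ∂G :=
          lintegral_add_left ((measurable_llr _ _).ennreal_ofReal) _
      _ < ∞ := ENNReal.add_lt_top.2 ⟨hofReal_llr,
          lt_of_le_of_lt (hfrac (Fin.last n)) ENNReal.one_lt_top⟩
  have hIntGm : Integrable (llr Gm ν0) Gm := by
    refine ⟨(stronglyMeasurable_llr _ _).aestronglyMeasurable, ?_⟩
    have hpt : ∀ z, (‖llr Gm ν0 z‖₊ : ℝ≥0∞)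
        ≤ ENNReal.ofReal (llr Gm ν0 z) + ENNReal.ofReal (-(llr Gm ν0 z)) := by
      intro z
      rw [← enorm_eq_nnnorm, Real.enorm_eq_ofReal_abs]
      rcases le_or_gt 0 (llr Gm ν0 z) with h | h
      · rw [abs_of_nonneg h]; exact le_self_add
      · rw [abs_of_neg h]; exact le_add_self
    show (∫⁻ z, (‖llr Gm ν0 z‖₊ : ℝ≥0∞) ∂Gm) < ∞
    calc ∫⁻ z, (‖llr Gm ν0 z‖₊ : ℝ≥0∞) ∂Gm
        ≤ ∫⁻ z, (ENNReal.ofReal (llr Gm ν0 z) + ENNReal.ofReal (-(llr Gm ν0 z))) ∂Gm :=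
          lintegral_mono hpt
      _ = ∫⁻ z, ENNReal.ofReal (llr Gm ν0 z) ∂Gm
          + ∫⁻ z, ENNReal.ofReal (-(llr Gm ν0 z)) ∂Gm :=
          lintegral_add_left ((measurable_llr _ _).ennreal_ofReal) _
      _ < ∞ := ENNReal.add_lt_top.2 ⟨hposGm,
          lt_of_le_of_lt (lintegral_ofReal_neg_llr_le Gm ν0 hGmac) ENNReal.one_lt_top⟩
  -- integrability and value of each marginal log-density term
  have hLmeas : ∀ i, Measurable fun x => Real.log (g i (π i x)).toReal := by
    intro i
    exact Real.measurable_log.comp (((hg i).comp (hπ i)).ennreal_toReal)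
  have hIntLi : ∀ i, Integrable (fun x => Real.log (g i (π i x)).toReal) G := by
    intro i
    have h1 : Integrable (fun z => Real.log (g i z).toReal) Gm := hIntGm.congr (hllr i).symm
    rw [← hmarg i] at h1
    exact (integrable_map_measure
      ((Real.measurable_log.comp (hg i).ennreal_toReal).aestronglyMeasurable)
      (hπ i).aemeasurable).1 h1
  have hIeq : ∀ i, ∫ x, Real.log (g i (π i x)).toReal ∂G = Hrel Gm ν0 := by
    intro i
    have h0 : ∫ x, Real.log (g i (π i x)).toReal ∂G
        = ∫ z, Real.log (g i z).toReal ∂(Measure.map (π i) G) := by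
      exact (integral_map (φ := π i) (f := fun z => Real.log (g i z).toReal)
        (hπ i).aemeasurable
        ((Real.measurable_log.comp (hg i).ennreal_toReal).aestronglyMeasurable)).symm
    rw [h0, hmarg i, integral_congr_ae (hllr i)]
    rfl
  -- the Gibbs argument
  set W : (Fin (n+1) → E) → ℝ :=
    fun x => (∑ i : Fin (n+1), p * Real.log (g i (π i x)).toReal) - llr G ν1 x with hW
  have hWmeas : Measurable W := by
    apply Measurable.sub
    · exact Finset.measurable_sum _ fun i _ => (measurable_const.mul (hLmeas i))
    · exact measurable_llr _ _
  have hIntW : Integrable W G :=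
    Integrable.sub (integrable_finset_sum _ fun i _ => ((hIntLi i).const_mul p)) hint
  have hintexp : ∫⁻ x, ENNReal.ofReal (Real.exp (W x)) ∂G ≤ 1 := by
    have hae : ∀ᵐ x ∂G, ENNReal.ofReal (Real.exp (W x))
        = (∏ i : Fin (n+1), (g i (π i x)) ^ p) / f x := by
      filter_upwards [hfpos, hffin, ae_all_iff.2 hgpos, ae_all_iff.2 hgfin] with x h1 h2 h3 h4
      have hfa : (0:ℝ) < (f x).toReal := ENNReal.toReal_pos h1.ne' h2.ne
      have hgi : ∀ i, (0:ℝ) < (g i (π i x)).toReal :=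
        fun i => ENNReal.toReal_pos (h3 i).ne' (h4 i).ne
      have hexpW : Real.exp (W x)
          = (∏ i : Fin (n+1), ((g i (π i x)).toReal) ^ p) / (f x).toReal := by
        rw [hW]
        simp only
        rw [Real.exp_sub, Real.exp_sum]
        congr 1
        · exact Finset.prod_congr rfl fun i _ => by
            rw [mul_comm, ← Real.rpow_def_of_pos (hgi i)]
        · rw [llr, Real.exp_log hfa]
      rw [hexpW, ENNReal.ofReal_div_of_pos hfa,
        ENNReal.ofReal_prod_of_nonneg (fun i _ => (Real.rpow_pos_of_pos (hgi i) p).le),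
        ENNReal.ofReal_toReal h2.ne]
      congr 1
      refine Finset.prod_congr rfl fun i _ => ?_
      rw [← ENNReal.ofReal_rpow_of_pos (hgi i), ENNReal.ofReal_toReal (h4 i).ne]
    rw [lintegral_congr_ae hae]
    have hmeasP : Measurable fun x => (∏ i : Fin (n+1), (g i (π i x)) ^ p) / f x := by
      apply Measurable.div _ hf
      exact Finset.measurable_prod _ fun i _ =>
        (ENNReal.continuous_rpow_const.measurable).comp ((hg i).comp (hπ i))
    have h1 : ∫⁻ x, (∏ i : Fin (n+1), (g i (π i x)) ^ p) / f x ∂G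
        = ∫⁻ x, (f * fun x => (∏ i : Fin (n+1), (g i (π i x)) ^ p) / f x) x ∂ν1 := by
      rw [← lintegral_withDensity_eq_lintegral_mul ν1 hf hmeasP, hGf]
    rw [h1]
    calc ∫⁻ x, (f * fun x => (∏ i : Fin (n+1), (g i (π i x)) ^ p) / f x) x ∂ν1
        ≤ ∫⁻ x, ∏ i : Fin (n+1), (g i (π i x)) ^ p ∂ν1 := lintegral_mono fun x => ENNReal.mul_div_le
      _ ≤ 1 := hgrid
  have hexp_int : Integrable (fun x => Real.exp (W x)) G := by
    refine ⟨(Real.measurable_exp.comp hWmeas).aestronglyMeasurable, ?_⟩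
    show (∫⁻ x, (‖Real.exp (W x)‖₊ : ℝ≥0∞) ∂G) < ∞
    have : ∀ x, (‖Real.exp (W x)‖₊ : ℝ≥0∞) = ENNReal.ofReal (Real.exp (W x)) :=
      fun x => Real.enorm_eq_ofReal (Real.exp_pos _).le
    simp_rw [this]
    exact lt_of_le_of_lt hintexp ENNReal.one_lt_top
  have hexp_le : ∫ x, Real.exp (W x) ∂G ≤ 1 := by
    rw [integral_eq_lintegral_of_nonneg_ae (Filter.Eventually.of_forall fun x => (Real.exp_pos _).le)
      hexp_int.1]
    exact ENNReal.toReal_le_of_le_ofReal zero_le_one (by simpa using hintexp)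
  have hWle : ∫ x, W x ∂G ≤ 0 := by
    have h1 : ∫ x, W x ∂G ≤ ∫ x, (Real.exp (W x) - 1) ∂G := by
      apply integral_mono hIntW (hexp_int.sub (integrable_const 1))
      intro x
      have := Real.add_one_le_exp (W x)
      simp only [Pi.sub_apply]
      linarith
    have h2 : ∫ x, (Real.exp (W x) - 1) ∂G = ∫ x, Real.exp (W x) ∂G - 1 := by
      rw [integral_sub hexp_int (integrable_const 1), integral_const]
      simp
    linarith
  have hWval : ∫ x, W x ∂G = ((n:ℝ)+1) * p * Hrel Gm ν0 - Hrel G ν1 := by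
    rw [hW]
    simp only
    rw [integral_sub (integrable_finset_sum _ fun i _ => ((hIntLi i).const_mul p)) hint]
    have h1 : ∫ x, (∑ i : Fin (n+1), p * Real.log (g i (π i x)).toReal) ∂G
        = ∑ i : Fin (n+1), p * ∫ x, Real.log (g i (π i x)).toReal ∂G := by
      rw [integral_finset_sum _ fun i _ => ((hIntLi i).const_mul p)]
      exact Finset.sum_congr rfl fun i _ => integral_const_mul p _
    rw [h1]
    have h2 : ∀ i : Fin (n+1), p * ∫ x, Real.log (g i (π i x)).toReal ∂G = p * Hrel Gm ν0 :=
      fun i => by rw [hIeq i]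
    rw [Finset.sum_congr rfl fun i _ => h2 i, Finset.sum_const, Finset.card_univ,
      Fintype.card_fin]
    have h3 : ∫ x, llr G ν1 x ∂G = Hrel G ν1 := rfl
    rw [h3]
    push_cast
    ring
  refine ⟨hGmac, hIntGm, ?_⟩
  rw [hWval] at hWle
  rw [hp] at hWle
  have hfin : ((n:ℝ)+1) * Hrel Gm ν0 ≤ (n:ℝ) * Hrel G ν1 := by
    have h4 : ((n:ℝ)+1) * (1/(n:ℝ)) * Hrel Gm ν0 ≤ Hrel G ν1 := by linarith
    have h5 := mul_le_mul_of_nonneg_left h4 hnR.le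
    calc ((n:ℝ)+1) * Hrel Gm ν0 = (n:ℝ) * (((n:ℝ)+1) * (1/(n:ℝ)) * Hrel Gm ν0) := by
          field_simp
      _ ≤ (n:ℝ) * Hrel G ν1 := h5
  exact hfin


lemma marg_sym {N n : ℕ} (h : n ≤ N) (G : Measure (Fin N → E))
    (hsym : ∀ σ : Equiv.Perm (Fin N),
      Measure.map (fun V : Fin N → E => fun i => V (σ i)) G = G)
    (σ : Equiv.Perm (Fin n)) :
    Measure.map (fun V : Fin n → E => fun i => V (σ i))
      (Measure.map (fun V : Fin N → E => fun i : Fin n => V (Fin.castLE h i)) G)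
      = Measure.map (fun V : Fin N → E => fun i : Fin n => V (Fin.castLE h i)) G := by
  set e : Fin n ≃ {k : Fin N // (k : ℕ) < n} :=
    { toFun := fun i => ⟨Fin.castLE h i, i.isLt⟩
      invFun := fun k => ⟨k.1.1, k.2⟩
      left_inv := fun i => rfl
      right_inv := fun k => rfl } with he
  set σ' : Equiv.Perm (Fin N) := σ.extendDomain e with hσ'
  have hkey : ∀ i : Fin n, σ' (Fin.castLE h i) = Fin.castLE h (σ i) := by
    intro i
    exact Equiv.Perm.extendDomain_apply_image σ e i
  have hmm : Measurable (fun V : Fin N → E => fun k => V (σ' k)) :=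
    measurable_pi_lambda _ fun k => measurable_pi_apply _
  have hm2 : Measurable (fun V : Fin N → E => fun i : Fin n => V (Fin.castLE h i)) :=
    measurable_pi_lambda _ fun k => measurable_pi_apply _
  have hm3 : Measurable (fun V : Fin n → E => fun i => V (σ i)) :=
    measurable_pi_lambda _ fun k => measurable_pi_apply _
  rw [Measure.map_map hm3 hm2]
  have hco : ((fun V : Fin n → E => fun i => V (σ i))
        ∘ (fun V : Fin N → E => fun i : Fin n => V (Fin.castLE h i)))
      = (fun V : Fin N → E => fun i : Fin n => V (Fin.castLE h i))
        ∘ (fun V : Fin N → E => fun k => V (σ' k)) := by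
    funext V
    funext i
    simp only [Function.comp_apply]
    rw [hkey i]
  rw [hco, ← Measure.map_map hm2 hmm, hsym σ']


end Aux

/-- Superadditivity of the normalized relative entropy over marginals for
symmetric measures: `(1/j) H(G_j|γ^{⊗j}) ≤ (1/N) H(G|γ^{⊗N})`. -/
theorem normalized_entropy_superadditive
    {E : Type*} [MeasurableSpace E]
    {N j : ℕ} (hj1 : 1 ≤ j) (hjN : j ≤ N)
    (γ : Measure E) [IsProbabilityMeasure γ]
    (G : Measure (Fin N → E)) [IsProbabilityMeasure G]
    (hGsym : ∀ σ : Equiv.Perm (Fin N),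
      Measure.map (fun V : Fin N → E => fun i => V (σ i)) G = G)
    (hGac : G ≪ Measure.pi fun _ : Fin N => γ)
    (hGint : Integrable
      (fun V => Real.log ((G.rnDeriv (Measure.pi fun _ : Fin N => γ) V).toReal)) G) :
    (1 / (j : ℝ)) * Hrel (Measure.map (fun V : Fin N → E => fun i : Fin j =>
        V (Fin.castLE hjN i)) G) (Measure.pi fun _ : Fin j => γ)
      ≤ (1 / (N : ℝ)) * Hrel G (Measure.pi fun _ : Fin N => γ) := by
  have key : ∀ d : ℕ, ∀ n : ℕ, 1 ≤ n → n + d = N →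
      ∀ h : n ≤ N,
      (Measure.map (fun V : Fin N → E => fun i : Fin n => V (Fin.castLE h i)) G
          ≪ Measure.pi fun _ : Fin n => γ)
      ∧ Integrable
          (llr (Measure.map (fun V : Fin N → E => fun i : Fin n => V (Fin.castLE h i)) G)
            (Measure.pi fun _ : Fin n => γ))
          (Measure.map (fun V : Fin N → E => fun i : Fin n => V (Fin.castLE h i)) G)
      ∧ (1 / (n : ℝ)) * Hrel
          (Measure.map (fun V : Fin N → E => fun i : Fin n => V (Fin.castLE h i)) G)
          (Measure.pi fun _ : Fin n => γ)
        ≤ (1 / (N : ℝ)) * Hrel G (Measure.pi fun _ : Fin N => γ) := by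
    intro d
    induction d with
    | zero =>
      intro n hn hd h
      have hnN : n = N := by omega
      subst hnN
      have hid : (fun V : Fin n → E => fun i : Fin n => V (Fin.castLE h i)) = id := by
        funext V
        funext i
        rfl
      rw [hid, Measure.map_id]
      exact ⟨hGac, hGint, le_rfl⟩
    | succ d ih =>
      intro n hn hd h
      have h1 : n + 1 ≤ N := by omega
      obtain ⟨ac1, int1, ineq1⟩ := ih (n+1) (by omega) (by omega) h1
      have hm1 : Measurable (fun V : Fin N → E => fun i : Fin (n+1) => V (Fin.castLE h1 i)) :=
        measurable_pi_lambda _ fun k => measurable_pi_apply _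
      haveI : IsProbabilityMeasure
          (Measure.map (fun V : Fin N → E => fun i : Fin (n+1) => V (Fin.castLE h1 i)) G) :=
        Measure.isProbabilityMeasure_map hm1.aemeasurable
      obtain ⟨ac2, int2, ineq2⟩ := han_step hn γ
        (Measure.map (fun V : Fin N → E => fun i : Fin (n+1) => V (Fin.castLE h1 i)) G)
        (marg_sym h1 G hGsym) ac1 int1
      have hcomp : Measure.map (fun (x : Fin (n+1) → E) (i : Fin n) => x i.castSucc)
          (Measure.map (fun V : Fin N → E => fun i : Fin (n+1) => V (Fin.castLE h1 i)) G)
          = Measure.map (fun V : Fin N → E => fun i : Fin n => V (Fin.castLE h i)) G := by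
        rw [Measure.map_map
          (measurable_pi_lambda _ fun k => measurable_pi_apply _) hm1]
        rfl
      rw [hcomp] at ac2 int2 ineq2
      refine ⟨ac2, int2, ?_⟩
      have hnR : (0:ℝ) < (n:ℝ) := by exact_mod_cast hn
      have hn1R : (0:ℝ) < (n:ℝ)+1 := by positivity
      have hstep : (1/(n:ℝ)) * Hrel
            (Measure.map (fun V : Fin N → E => fun i : Fin n => V (Fin.castLE h i)) G)
            (Measure.pi fun _ : Fin n => γ)
          ≤ (1/((n:ℝ)+1)) * Hrel
            (Measure.map (fun V : Fin N → E => fun i : Fin (n+1) => V (Fin.castLE h1 i)) G)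
            (Measure.pi fun _ : Fin (n+1) => γ) := by
        rw [one_div_mul_eq_div, one_div_mul_eq_div, div_le_div_iff₀ hnR hn1R]
        nlinarith [ineq2]
      have hcast : ((n+1 : ℕ) : ℝ) = (n:ℝ)+1 := by push_cast; ring
      rw [hcast] at ineq1
      exact le_trans hstep ineq1
  exact (key (N - j) j hj1 (by omega) hjN).2.2
end

section
/- If G^N = f^{⊗N} is a product measure on E^N with E ⊂ ℝ^d and f has finite second moment, and Z ∼ f^{⊗N}, then E[ ‖μ^N_Z - f‖²_{H^{-s}} ] ≤ C_s / N for s > d/2, where C_s depends only on s, d and the second moment of f. -/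
open MeasureTheory
open scoped BigOperators ENNReal RealInnerProductSpace

/-- Characteristic function (Fourier transform) of a measure on `ℝ^d`. -/
noncomputable def charFn {d : ℕ} (μ : Measure (EuclideanSpace ℝ (Fin d)))
    (ξ : EuclideanSpace ℝ (Fin d)) : ℂ :=
  ∫ x, Complex.exp (-Complex.I * (⟪x, ξ⟫ : ℝ)) ∂μ

/-- Squared negative Sobolev distance
`‖μ - ν‖²_{H^{-s}} = ∫ (1+|ξ|²)^{-s} |μ̂(ξ) - ν̂(ξ)|² dξ`. -/
noncomputable def HnegSq {d : ℕ} (s : ℝ)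
    (μ ν : Measure (EuclideanSpace ℝ (Fin d))) : ℝ :=
  ∫ ξ : EuclideanSpace ℝ (Fin d),
    (1 + ‖ξ‖ ^ 2) ^ (-s) * ‖charFn μ ξ - charFn ν ξ‖ ^ 2

/-- The empirical measure `μ^N_V = (1/N) Σᵢ δ_{vᵢ}`. -/
noncomputable def empMeas {E : Type*} [MeasurableSpace E] {N : ℕ}
    (V : Fin N → E) : Measure E :=
  ((N : ℝ≥0∞))⁻¹ • ∑ i, Measure.dirac (V i)

section Aux
lemma integral_pi_prod_gen {E : Type*} [MeasurableSpace E] (μ : Measure E) [SigmaFinite μ]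
    {n : ℕ} (g : Fin n → E → ℝ) :
    ∫ V, ∏ i, g i (V i) ∂(Measure.pi fun _ : Fin n => μ) = ∏ i, ∫ x, g i x ∂μ := by
  induction n with
  | zero => simp [Measure.real, Measure.pi_univ]
  | succ n ih =>
      calc
        _ = ∫ x : E × (Fin n → E),
            g 0 x.1 * ∏ i : Fin n, g (Fin.succ i) (x.2 i)
              ∂(μ.prod (Measure.pi fun _ : Fin n => μ)) := by
          rw [← ((measurePreserving_piFinSuccAbove
            (fun _ : Fin (n+1) => μ) 0).symm).integral_comp']
          simp_rw [MeasurableEquiv.piFinSuccAbove_symm_apply, Fin.insertNthEquiv,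
            Fin.prod_univ_succ, Fin.insertNth_zero, Equiv.coe_fn_mk, Fin.cons_succ,
            Fin.cons_zero]
          simp [Fin.zero_succAbove]
        _ = (∫ x, g 0 x ∂μ) * ∏ i : Fin n, ∫ x, g (Fin.succ i) x ∂μ := by
          rw [← ih fun i => g (Fin.succ i), ← integral_prod_mul]
        _ = ∏ i, ∫ x, g i x ∂μ := by rw [Fin.prod_univ_succ]

lemma integrable_of_bdd {E : Type*} [MeasurableSpace E] {μ : Measure E} [IsFiniteMeasure μ]
    {u : E → ℝ} {B : ℝ} (hu : Measurable u) (hb : ∀ x, |u x| ≤ B) : Integrable u μ :=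
  (integrable_const B).mono' hu.aestronglyMeasurable
    (Filter.Eventually.of_forall fun x => by simpa using hb x)

lemma key_var {E : Type*} [MeasurableSpace E] (μ : Measure E) [IsProbabilityMeasure μ]
    {u : E → ℝ} (hu : Measurable u) (hb : ∀ x, |u x| ≤ 1) (N : ℕ) :
    ∫ V, (∑ i : Fin N, (u (V i) - ∫ x, u x ∂μ)) ^ 2 ∂(Measure.pi fun _ : Fin N => μ)
      ≤ 4 * N := by
  set a := ∫ x, u x ∂μ with ha_def
  have hu_int : Integrable u μ := integrable_of_bdd hu hb
  have ha : |a| ≤ 1 := by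
    calc |a| ≤ ∫ x, |u x| ∂μ := by
          simpa [Real.norm_eq_abs] using norm_integral_le_integral_norm (μ := μ) u
    _ ≤ ∫ _x, (1:ℝ) ∂μ := integral_mono hu_int.abs (integrable_const 1) hb
    _ = 1 := by simp
  set v : E → ℝ := fun x => u x - a with hv_def
  have hv : Measurable v := hu.sub measurable_const
  have hvb : ∀ x, |v x| ≤ 2 := fun x => by
    calc |v x| ≤ |u x| + |a| := abs_sub _ _
    _ ≤ 2 := by linarith [hb x, ha]
  have hv_int : Integrable v μ := integrable_of_bdd hv hvb
  have hv0 : ∫ x, v x ∂μ = 0 := by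
    simp [hv_def, integral_sub hu_int (integrable_const a), ← ha_def]
  have hvsqb : ∀ x, v x ^ 2 ≤ 4 := fun x => by
    calc v x ^ 2 = |v x| ^ 2 := (sq_abs _).symm
    _ ≤ 2 ^ 2 := pow_le_pow_left₀ (abs_nonneg _) (hvb x) 2
    _ = 4 := by norm_num
  have hvsq : ∫ x, v x ^ 2 ∂μ ≤ 4 := by
    calc ∫ x, v x ^ 2 ∂μ ≤ ∫ _x, (4:ℝ) ∂μ :=
          integral_mono (integrable_of_bdd (B := 4) (hv.pow_const 2)
            (fun x => by rw [abs_of_nonneg (sq_nonneg _)]; exact hvsqb x))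
            (integrable_const 4) (fun x => hvsqb x)
    _ = 4 := by simp
  -- term integral
  have hterm : ∀ i j : Fin N,
      (∫ V, v (V i) * v (V j) ∂(Measure.pi fun _ : Fin N => μ))
        = if i = j then ∫ x, v x ^ 2 ∂μ else 0 := by
    intro i j
    by_cases hij : i = j
    · subst hij
      simp only [if_pos rfl]
      have : ∀ V : Fin N → E, v (V i) * v (V i)
          = ∏ l, (fun l => if l = i then (fun x => v x ^ 2) else (fun _ => (1:ℝ))) l (V l) := by
        intro V
        rw [Finset.prod_eq_single i (fun b _ hb' => by simp [hb']) (by simp)]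
        simp [sq]
      simp_rw [this]
      rw [integral_pi_prod_gen]
      rw [Finset.prod_eq_single i (fun b _ hb' => by simp [hb']) (by simp)]
      simp
    · simp only [if_neg hij]
      have : ∀ V : Fin N → E, v (V i) * v (V j)
          = ∏ l, (fun l => if l = i then v else if l = j then v else (fun _ => (1:ℝ))) l (V l) := by
        intro V
        rw [Finset.prod_eq_mul_of_mem i j (by simp) (by simp) hij
          (fun c _ hc => by simp [hc.1, hc.2])]
        simp [hij]
      simp_rw [this]
      rw [integral_pi_prod_gen]
      refine Finset.prod_eq_zero (Finset.mem_univ i) ?_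
      simp [hv0]
  -- expand the square
  have hmeas_pi : ∀ i : Fin N, Measurable fun V : Fin N → E => v (V i) :=
    fun i => hv.comp (measurable_pi_apply i)
  have hsum : ∀ V : Fin N → E, (∑ i : Fin N, (u (V i) - a)) ^ 2
      = ∑ i : Fin N, ∑ j : Fin N, v (V i) * v (V j) := by
    intro V
    rw [sq, Finset.sum_mul_sum]
  calc ∫ V, (∑ i : Fin N, (u (V i) - a)) ^ 2 ∂(Measure.pi fun _ : Fin N => μ)
      = ∑ i : Fin N, ∑ j : Fin N,
          ∫ V, v (V i) * v (V j) ∂(Measure.pi fun _ : Fin N => μ) := by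
        simp_rw [hsum]
        rw [integral_finset_sum _ (fun i _ => integrable_finset_sum _ (fun j _ => integrable_of_bdd (u := fun V : Fin N → E => v (V i) * v (V j)) ((hmeas_pi i).mul (hmeas_pi j))
              (fun V => by
                calc |v (V i) * v (V j)| = |v (V i)| * |v (V j)| := abs_mul _ _
                _ ≤ 2 * 2 := mul_le_mul (hvb _) (hvb _) (abs_nonneg _) (by norm_num)
                _ = 4 := by norm_num)))]
        · exact Finset.sum_congr rfl fun i _ => integral_finset_sum _ fun j _ =>
            integrable_of_bdd ((hmeas_pi i).mul (hmeas_pi j))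
              (fun V => by
                calc |v (V i) * v (V j)| = |v (V i)| * |v (V j)| := abs_mul _ _
                _ ≤ 2 * 2 := mul_le_mul (hvb _) (hvb _) (abs_nonneg _) (by norm_num)
                _ = 4 := by norm_num)
    _ = ∑ i : Fin N, ∫ x, v x ^ 2 ∂μ := by
        refine Finset.sum_congr rfl fun i _ => ?_
        rw [Finset.sum_eq_single i (fun j _ hj => by rw [hterm i j, if_neg (Ne.symm hj)])
          (by simp)]
        rw [hterm i i, if_pos rfl]
    _ ≤ ∑ _i : Fin N, (4:ℝ) := Finset.sum_le_sum fun i _ => hvsq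
    _ = 4 * N := by simp [mul_comm]

variable {d : ℕ}

lemma exp_inner_continuous (ξ : EuclideanSpace ℝ (Fin d)) :
    Continuous fun x : EuclideanSpace ℝ (Fin d) =>
      Complex.exp (-Complex.I * (⟪x, ξ⟫ : ℝ)) :=
  Complex.continuous_exp.comp (continuous_const.mul
    (Complex.continuous_ofReal.comp (continuous_id.inner continuous_const)))

lemma exp_inner_continuous' (x : EuclideanSpace ℝ (Fin d)) :
    Continuous fun ξ : EuclideanSpace ℝ (Fin d) =>
      Complex.exp (-Complex.I * (⟪x, ξ⟫ : ℝ)) :=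
  Complex.continuous_exp.comp (continuous_const.mul
    (Complex.continuous_ofReal.comp (continuous_const.inner continuous_id)))

lemma norm_exp_inner (r : ℝ) : ‖Complex.exp (-Complex.I * (r : ℝ))‖ = 1 := by
  rw [Complex.norm_exp]
  simp

lemma re_exp_inner (r : ℝ) : (Complex.exp (-Complex.I * (r : ℝ))).re = Real.cos r := by
  simp [Complex.exp_re]

lemma im_exp_inner (r : ℝ) : (Complex.exp (-Complex.I * (r : ℝ))).im = -Real.sin r := by
  simp [Complex.exp_im]

lemma exp_inner_integrable (μ : Measure (EuclideanSpace ℝ (Fin d))) [IsFiniteMeasure μ]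
    (ξ : EuclideanSpace ℝ (Fin d)) :
    Integrable (fun x => Complex.exp (-Complex.I * (⟪x, ξ⟫ : ℝ))) μ :=
  (integrable_const (1:ℝ)).mono' (exp_inner_continuous ξ).aestronglyMeasurable
    (Filter.Eventually.of_forall fun x => by rw [norm_exp_inner])

lemma charFn_norm_le (μ : Measure (EuclideanSpace ℝ (Fin d))) [IsProbabilityMeasure μ]
    (ξ : EuclideanSpace ℝ (Fin d)) : ‖charFn μ ξ‖ ≤ 1 := by
  rw [charFn]
  calc ‖∫ x, Complex.exp (-Complex.I * (⟪x, ξ⟫ : ℝ)) ∂μ‖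
      ≤ 1 * (μ Set.univ).toReal := by
        refine norm_integral_le_of_norm_le_const ?_
        exact Filter.Eventually.of_forall fun x => by rw [norm_exp_inner]
  _ = 1 := by simp

lemma charFn_empMeas {N : ℕ} (V : Fin N → EuclideanSpace ℝ (Fin d))
    (ξ : EuclideanSpace ℝ (Fin d)) :
    charFn (empMeas V) ξ
      = (N:ℝ)⁻¹ • ∑ i, Complex.exp (-Complex.I * (⟪V i, ξ⟫ : ℝ)) := by
  rw [charFn, empMeas, integral_smul_measure,
    integral_finset_sum_measure (fun i _ => exp_inner_integrable _ ξ)]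
  simp [integral_dirac' _ _ (exp_inner_continuous ξ).stronglyMeasurable]

lemma empMeas_prob {E : Type*} [MeasurableSpace E] {N : ℕ} (hN : 1 ≤ N) (V : Fin N → E) :
    IsProbabilityMeasure (empMeas V) := by
  constructor
  rw [empMeas]
  simp only [Measure.smul_apply, Measure.coe_finset_sum, Finset.sum_apply,
    Measure.dirac_apply_of_mem (Set.mem_univ _), smul_eq_mul]
  rw [Finset.sum_const, Finset.card_univ, Fintype.card_fin, nsmul_eq_mul, mul_one]
  exact ENNReal.inv_mul_cancel (Nat.cast_ne_zero.mpr (Nat.one_le_iff_ne_zero.mp hN))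
    (ENNReal.natCast_ne_top N)

lemma charFn_continuous (μ : Measure (EuclideanSpace ℝ (Fin d))) [IsProbabilityMeasure μ] :
    Continuous fun ξ => charFn μ ξ := by
  refine continuous_of_dominated
    (F := fun ξ x => Complex.exp (-Complex.I * (⟪x, ξ⟫ : ℝ))) (bound := fun _ => 1)
    (fun ξ => (exp_inner_continuous ξ).aestronglyMeasurable)
    (fun ξ => Filter.Eventually.of_forall fun x => by rw [norm_exp_inner])
    (integrable_const 1) (Filter.Eventually.of_forall fun x => exp_inner_continuous' x)

lemma inner_bound (f : Measure (EuclideanSpace ℝ (Fin d))) [IsProbabilityMeasure f]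
    {N : ℕ} (hN : 1 ≤ N) (ξ : EuclideanSpace ℝ (Fin d)) :
    ∫ V, ‖charFn (empMeas V) ξ - charFn f ξ‖ ^ 2 ∂(Measure.pi fun _ : Fin N => f)
      ≤ 8 / N := by
  have hN0 : (N:ℝ) ≠ 0 := Nat.cast_ne_zero.mpr (Nat.one_le_iff_ne_zero.mp hN)
  set c : EuclideanSpace ℝ (Fin d) → ℝ := fun x => Real.cos ⟪x, ξ⟫ with hc_def
  set sn : EuclideanSpace ℝ (Fin d) → ℝ := fun x => -Real.sin ⟪x, ξ⟫ with hsn_def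
  have hinner_cont : Continuous fun x : EuclideanSpace ℝ (Fin d) => (⟪x, ξ⟫ : ℝ) :=
    continuous_id.inner continuous_const
  have hc_meas : Measurable c := (Real.continuous_cos.comp hinner_cont).measurable
  have hsn_meas : Measurable sn := (Real.continuous_sin.comp hinner_cont).neg.measurable
  have hc_bdd : ∀ x, |c x| ≤ 1 := fun x => Real.abs_cos_le_one _
  have hsn_bdd : ∀ x, |sn x| ≤ 1 := fun x => by
    rw [hsn_def]; rw [abs_neg]; exact Real.abs_sin_le_one _
  set m := charFn f ξ with hm_def
  have hm_re : m.re = ∫ x, c x ∂f := by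
    rw [hm_def, charFn]
    have h := integral_re (μ := f) (exp_inner_integrable f ξ)
    simp only [RCLike.re_to_complex] at h
    rw [← h]
    exact integral_congr_ae (Filter.Eventually.of_forall fun x => re_exp_inner _)
  have hm_im : m.im = ∫ x, sn x ∂f := by
    rw [hm_def, charFn]
    have h := integral_im (μ := f) (exp_inner_integrable f ξ)
    simp only [RCLike.im_to_complex] at h
    rw [← h]
    exact integral_congr_ae (Filter.Eventually.of_forall fun x => im_exp_inner _)
  -- pointwise identity
  have hpt : ∀ V : Fin N → EuclideanSpace ℝ (Fin d),
      ‖charFn (empMeas V) ξ - m‖ ^ 2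
        = ((N:ℝ)⁻¹) ^ 2 * ((∑ i, (c (V i) - ∫ x, c x ∂f)) ^ 2
            + (∑ i, (sn (V i) - ∫ x, sn x ∂f)) ^ 2) := by
    intro V
    rw [charFn_empMeas]
    have h1 : (N:ℝ)⁻¹ • (∑ i, Complex.exp (-Complex.I * (⟪V i, ξ⟫ : ℝ))) - m
        = (N:ℝ)⁻¹ • (∑ i : Fin N, (Complex.exp (-Complex.I * (⟪V i, ξ⟫ : ℝ)) - m)) := by
      rw [Finset.sum_sub_distrib, smul_sub, Finset.sum_const, Finset.card_univ,
        Fintype.card_fin]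
      congr 1
      rw [← Nat.cast_smul_eq_nsmul ℝ, smul_smul, inv_mul_cancel₀ hN0, one_smul]
    rw [h1, norm_smul]
    set w : ℂ := ∑ i : Fin N, (Complex.exp (-Complex.I * (⟪V i, ξ⟫ : ℝ)) - m) with hw_def
    have hw_re : w.re = ∑ i, (c (V i) - ∫ x, c x ∂f) := by
      rw [hw_def, Complex.re_sum]
      exact Finset.sum_congr rfl fun i _ => by
        rw [Complex.sub_re, re_exp_inner, ← hm_re]
    have hw_im : w.im = ∑ i, (sn (V i) - ∫ x, sn x ∂f) := by
      rw [hw_def, Complex.im_sum]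
      exact Finset.sum_congr rfl fun i _ => by
        rw [Complex.sub_im, im_exp_inner, ← hm_im]
    have : ‖w‖ ^ 2 = w.re ^ 2 + w.im ^ 2 := by
      rw [Complex.sq_norm, Complex.normSq_apply, sq, sq]
    rw [mul_pow, this, hw_re, hw_im]
    congr 1
    rw [Real.norm_eq_abs, abs_inv, Nat.abs_cast]
  -- integrate
  set P := Measure.pi fun _ : Fin N => f with hP_def
  have hA_meas : Measurable fun V : Fin N → EuclideanSpace ℝ (Fin d) =>
      (∑ i, (c (V i) - ∫ x, c x ∂f)) ^ 2 :=
    (Finset.measurable_sum _ fun i _ =>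
      (hc_meas.comp (measurable_pi_apply i)).sub measurable_const).pow_const 2
  have hB_meas : Measurable fun V : Fin N → EuclideanSpace ℝ (Fin d) =>
      (∑ i, (sn (V i) - ∫ x, sn x ∂f)) ^ 2 :=
    (Finset.measurable_sum _ fun i _ =>
      (hsn_meas.comp (measurable_pi_apply i)).sub measurable_const).pow_const 2
  have habs : ∀ (u : EuclideanSpace ℝ (Fin d) → ℝ), Measurable u → (∀ x, |u x| ≤ 1) →
      ∀ V : Fin N → EuclideanSpace ℝ (Fin d),
      |(∑ i, (u (V i) - ∫ x, u x ∂f)) ^ 2| ≤ (2*N)^2 := by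
    intro u hu_meas hu V
    rw [abs_of_nonneg (sq_nonneg _)]
    have h2 : |∑ i, (u (V i) - ∫ x, u x ∂f)| ≤ 2 * N := by
      calc |∑ i, (u (V i) - ∫ x, u x ∂f)| ≤ ∑ i : Fin N, |u (V i) - ∫ x, u x ∂f| :=
            Finset.abs_sum_le_sum_abs _ _
      _ ≤ ∑ _i : Fin N, (2:ℝ) := by
          refine Finset.sum_le_sum fun i _ => ?_
          have hint : |∫ x, u x ∂f| ≤ 1 := by
            calc |∫ x, u x ∂f| ≤ ∫ x, |u x| ∂f := by
                  simpa [Real.norm_eq_abs] using norm_integral_le_integral_norm (μ := f) u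
            _ ≤ ∫ _x, (1:ℝ) ∂f := integral_mono ((integrable_of_bdd (B := 1)
                  hu_meas hu).abs)
                  (integrable_const 1) hu
            _ = 1 := by simp
          calc |u (V i) - ∫ x, u x ∂f| ≤ |u (V i)| + |∫ x, u x ∂f| := abs_sub _ _
          _ ≤ 2 := by linarith [hu (V i)]
      _ = 2 * N := by simp [mul_comm]
    calc (∑ i, (u (V i) - ∫ x, u x ∂f)) ^ 2
        = |∑ i, (u (V i) - ∫ x, u x ∂f)| ^ 2 := (sq_abs _).symm
    _ ≤ (2*N)^2 := by
        refine pow_le_pow_left₀ (abs_nonneg _) h2 2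
  calc ∫ V, ‖charFn (empMeas V) ξ - m‖ ^ 2 ∂P
      = ∫ V, ((N:ℝ)⁻¹) ^ 2 * ((∑ i, (c (V i) - ∫ x, c x ∂f)) ^ 2
            + (∑ i, (sn (V i) - ∫ x, sn x ∂f)) ^ 2) ∂P := by
        exact integral_congr_ae (Filter.Eventually.of_forall hpt)
  _ = ((N:ℝ)⁻¹) ^ 2 * ((∫ V, (∑ i, (c (V i) - ∫ x, c x ∂f)) ^ 2 ∂P)
        + ∫ V, (∑ i, (sn (V i) - ∫ x, sn x ∂f)) ^ 2 ∂P) := by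
      simp_rw [← smul_eq_mul]
      rw [integral_smul, integral_add
        (integrable_of_bdd hA_meas (habs c hc_meas hc_bdd))
        (integrable_of_bdd hB_meas (habs sn hsn_meas hsn_bdd))]
  _ ≤ ((N:ℝ)⁻¹) ^ 2 * (4 * N + 4 * N) := by
      have h1 := key_var f hc_meas hc_bdd N
      have h2 := key_var f hsn_meas hsn_bdd N
      have hnn : (0:ℝ) ≤ ((N:ℝ)⁻¹) ^ 2 := sq_nonneg _
      exact mul_le_mul_of_nonneg_left (by rw [hP_def] at *; linarith) hnn
  _ = 8 / N := by field_simp; ring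

end Aux

/-- Law of large numbers in `H^{-s}`, `s > d/2`: for i.i.d. samples from `f`,
`E[‖μ^N_Z - f‖²_{H^{-s}}] ≤ C_s / N` with `C_s` depending only on `s`, `d` and
the second moment of `f`. -/
theorem empirical_Hneg_LLN_iid {d : ℕ} (s : ℝ) (hs : (d : ℝ) / 2 < s)
    (f : Measure (EuclideanSpace ℝ (Fin d))) [IsProbabilityMeasure f]
    (hmom : Integrable (fun x => ‖x‖ ^ 2) f) :
    ∃ C : ℝ, 0 < C ∧ ∀ N : ℕ, 1 ≤ N →
      (∫ V, HnegSq s (empMeas V) f ∂(Measure.pi fun _ : Fin N => f)) ≤ C / N := by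
  set w : EuclideanSpace ℝ (Fin d) → ℝ := fun ξ => (1 + ‖ξ‖ ^ 2) ^ (-s) with hw_def
  have hw_cont : Continuous w := by
    refine Continuous.rpow_const (by continuity) fun ξ => Or.inl ?_
    positivity
  have hw_nonneg : ∀ ξ, 0 ≤ w ξ := fun ξ => Real.rpow_nonneg (by positivity) _
  have hw_int : Integrable w (volume : Measure (EuclideanSpace ℝ (Fin d))) := by
    have h := integrable_rpow_neg_one_add_norm_sq (E := EuclideanSpace ℝ (Fin d))
      (μ := volume) (r := 2*s) (by rw [finrank_euclideanSpace_fin]; linarith)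
    have : (fun ξ : EuclideanSpace ℝ (Fin d) => ((1:ℝ) + ‖ξ‖ ^ 2) ^ (-(2*s)/2)) = w := by
      funext ξ; rw [hw_def]; congr 1; ring
    rwa [this] at h
  set I := ∫ ξ, w ξ with hI_def
  have hI_nonneg : 0 ≤ I := integral_nonneg hw_nonneg
  refine ⟨8 * I + 1, by positivity, fun N hN => ?_⟩
  have hN0 : (0:ℝ) < N := by exact_mod_cast Nat.pos_of_ne_zero (Nat.one_le_iff_ne_zero.mp hN)
  set P := Measure.pi fun _ : Fin N => f with hP_def
  haveI : ∀ V : Fin N → EuclideanSpace ℝ (Fin d), IsProbabilityMeasure (empMeas V) :=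
    fun V => empMeas_prob hN V
  set F : (Fin N → EuclideanSpace ℝ (Fin d)) → EuclideanSpace ℝ (Fin d) → ℝ :=
    fun V ξ => w ξ * ‖charFn (empMeas V) ξ - charFn f ξ‖ ^ 2 with hF_def
  -- continuity of uncurried F
  have hD_cont : Continuous fun p : (Fin N → EuclideanSpace ℝ (Fin d)) × EuclideanSpace ℝ (Fin d)
      => charFn (empMeas p.1) p.2 - charFn f p.2 := by
    have h1 : (fun p : (Fin N → EuclideanSpace ℝ (Fin d)) × EuclideanSpace ℝ (Fin d) =>
        charFn (empMeas p.1) p.2)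
        = fun p => (N:ℝ)⁻¹ • ∑ i, Complex.exp (-Complex.I * (⟪p.1 i, p.2⟫ : ℝ)) := by
      funext p; exact charFn_empMeas p.1 p.2
    have h2 : Continuous fun p : (Fin N → EuclideanSpace ℝ (Fin d)) × EuclideanSpace ℝ (Fin d) =>
        (N:ℝ)⁻¹ • ∑ i, Complex.exp (-Complex.I * (⟪p.1 i, p.2⟫ : ℝ)) := by
      refine Continuous.const_smul (?_ : Continuous fun p : (Fin N → EuclideanSpace ℝ (Fin d)) × EuclideanSpace ℝ (Fin d) => ∑ i, Complex.exp (-Complex.I * (⟪p.1 i, p.2⟫ : ℝ))) ((N:ℝ)⁻¹)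
      refine continuous_finset_sum _ fun i _ => ?_
      exact Complex.continuous_exp.comp (continuous_const.mul
        (Complex.continuous_ofReal.comp
          (((continuous_apply i).comp continuous_fst).inner continuous_snd)))
    have h0 : (fun p : (Fin N → EuclideanSpace ℝ (Fin d)) × EuclideanSpace ℝ (Fin d) =>
        charFn (empMeas p.1) p.2 - charFn f p.2)
        = fun p => ((N:ℝ)⁻¹ • ∑ i, Complex.exp (-Complex.I * (⟪p.1 i, p.2⟫ : ℝ)))
            - charFn f p.2 :=
      funext fun p => by rw [charFn_empMeas]
    rw [h0]
    exact h2.sub ((charFn_continuous f).comp continuous_snd)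
  have hF_cont : Continuous (Function.uncurry F) := by
    rw [hF_def]
    exact (hw_cont.comp continuous_snd).mul ((hD_cont.norm).pow 2)
  -- bound for F
  have hF_bdd : ∀ p : (Fin N → EuclideanSpace ℝ (Fin d)) × EuclideanSpace ℝ (Fin d),
      ‖Function.uncurry F p‖ ≤ 4 * w p.2 := by
    rintro ⟨V, ξ⟩
    have hD : ‖charFn (empMeas V) ξ - charFn f ξ‖ ≤ 2 := by
      calc ‖charFn (empMeas V) ξ - charFn f ξ‖
          ≤ ‖charFn (empMeas V) ξ‖ + ‖charFn f ξ‖ := norm_sub_le _ _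
      _ ≤ 1 + 1 := add_le_add (charFn_norm_le _ ξ) (charFn_norm_le f ξ)
      _ = 2 := by norm_num
    have hD2 : ‖charFn (empMeas V) ξ - charFn f ξ‖ ^ 2 ≤ 4 := by
      calc ‖charFn (empMeas V) ξ - charFn f ξ‖ ^ 2 ≤ 2 ^ 2 :=
        pow_le_pow_left₀ (norm_nonneg _) hD 2
      _ = 4 := by norm_num
    have : Function.uncurry F (V, ξ) = w ξ * ‖charFn (empMeas V) ξ - charFn f ξ‖ ^ 2 := rfl
    rw [this, Real.norm_eq_abs, abs_of_nonneg (mul_nonneg (hw_nonneg ξ) (sq_nonneg _))]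
    calc w ξ * ‖charFn (empMeas V) ξ - charFn f ξ‖ ^ 2 ≤ w ξ * 4 :=
      mul_le_mul_of_nonneg_left hD2 (hw_nonneg ξ)
    _ = 4 * w ξ := mul_comm _ _
  -- integrable bound on the product
  have hmap : (P.prod (volume : Measure (EuclideanSpace ℝ (Fin d)))).map Prod.snd = volume := by
    rw [Measure.map_snd_prod]
    simp
  have hbint : Integrable (fun p : (Fin N → EuclideanSpace ℝ (Fin d)) × EuclideanSpace ℝ (Fin d)
      => 4 * w p.2) (P.prod volume) := by
    have h1 : Integrable (fun ξ => 4 * w ξ) (volume : Measure (EuclideanSpace ℝ (Fin d))) :=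
      hw_int.const_mul 4
    rw [← hmap] at h1
    exact (integrable_map_measure ((hw_cont.const_smul (4:ℝ)).aestronglyMeasurable.mono_ac
        (by rw [hmap])) measurable_snd.aemeasurable).mp h1
  have hFint : Integrable (Function.uncurry F) (P.prod volume) :=
    hbint.mono' hF_cont.aestronglyMeasurable
      (Filter.Eventually.of_forall hF_bdd)
  -- swap
  have hswap : (∫ V, HnegSq s (empMeas V) f ∂P) = ∫ ξ, ∫ V, F V ξ ∂P := by
    have : (∫ V, HnegSq s (empMeas V) f ∂P) = ∫ V, ∫ ξ, F V ξ ∂(volume : Measure (EuclideanSpace ℝ (Fin d))) ∂P := rfl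
    rw [this, integral_integral_swap hFint]
  rw [hswap]
  have hpt : ∀ ξ, (∫ V, F V ξ ∂P) ≤ w ξ * (8 / N) := by
    intro ξ
    have : (∫ V, F V ξ ∂P) = w ξ * ∫ V, ‖charFn (empMeas V) ξ - charFn f ξ‖ ^ 2 ∂P := by
      rw [hF_def]
      simp_rw [← smul_eq_mul]
      rw [integral_smul]
    rw [this]
    exact mul_le_mul_of_nonneg_left (inner_bound f hN ξ) (hw_nonneg ξ)
  calc (∫ ξ, ∫ V, F V ξ ∂P)
      ≤ ∫ ξ, w ξ * (8 / N) := by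
        refine integral_mono_of_nonneg ?_ (hw_int.mul_const _) ?_
        · exact Filter.Eventually.of_forall fun ξ =>
            integral_nonneg fun V => mul_nonneg (hw_nonneg ξ) (sq_nonneg _)
        · exact Filter.Eventually.of_forall hpt
  _ = I * (8 / N) := by rw [integral_mul_const]
  _ ≤ (8 * I + 1) / N := by
      rw [div_eq_mul_inv, div_eq_mul_inv]
      have : I * (8 * (N:ℝ)⁻¹) = (8 * I) * (N:ℝ)⁻¹ := by ring
      rw [this]
      exact mul_le_mul_of_nonneg_right (by linarith) (by positivity)
end

section
/- More generally, for a symmetric probability measure G^N on (ℝ^d)^N and f ∈ P(ℝ^d), with Z ∼ G^N, the expected squared H^{-s} distance of the empirical measure to f is controlled by the two-particle marginal: E[‖μ^N_Z - f‖²_{H^{-s}}] ≤ C_s ( ‖G^N_2 - f^{⊗2}‖_{TV or weak dual norm} ) + C_s / N, for s > d/2, where the first term is ∫∫ K_s(x-y) d(G^N_2 - f⊗f) with K_s the kernel of (1+|ξ|²)^{-s} plus cross terms, each bounded by a fixed smooth test function paired against G^N_2 - f^{⊗2}. -/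
set_option maxHeartbeats 1000000

open MeasureTheory
open scoped BigOperators ENNReal RealInnerProductSpace

/-- Total variation distance between two measures. -/
noncomputable def tvDist {α : Type*} [MeasurableSpace α] (μ ν : Measure α) : ℝ :=
  sSup { r | ∃ A : Set α, MeasurableSet A ∧ r = |(μ A).toReal - (ν A).toReal| }

namespace EmpAux

/-! ### Total variation distance lemmas -/

section TV

variable {α : Type*} [MeasurableSpace α] (μ ν : Measure α)
  [IsFiniteMeasure μ] [IsFiniteMeasure ν]

lemma tv_bddAbove :
    BddAbove { r | ∃ A : Set α, MeasurableSet A ∧ r = |(μ A).toReal - (ν A).toReal| } := by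
  refine ⟨(μ Set.univ).toReal + (ν Set.univ).toReal, fun r hr => ?_⟩
  obtain ⟨A, hA, rfl⟩ := hr
  have h1 : (μ A).toReal ≤ (μ Set.univ).toReal :=
    ENNReal.toReal_mono (measure_ne_top _ _) (measure_mono (Set.subset_univ _))
  have h2 : (ν A).toReal ≤ (ν Set.univ).toReal :=
    ENNReal.toReal_mono (measure_ne_top _ _) (measure_mono (Set.subset_univ _))
  have h3 : (0:ℝ) ≤ (μ A).toReal := ENNReal.toReal_nonneg
  have h4 : (0:ℝ) ≤ (ν A).toReal := ENNReal.toReal_nonneg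
  rw [abs_sub_le_iff]
  constructor <;> linarith

lemma abs_le_tvDist {A : Set α} (hA : MeasurableSet A) :
    |(μ A).toReal - (ν A).toReal| ≤ tvDist μ ν :=
  le_csSup (tv_bddAbove μ ν) ⟨A, hA, rfl⟩

lemma tvDist_nonneg' : 0 ≤ tvDist μ ν := by
  have := abs_le_tvDist μ ν MeasurableSet.empty
  simp only [measure_empty] at this
  simpa using le_trans (abs_nonneg _) this

lemma integral_diff_le_tvDist (h : α → ℝ)
    (hm : AEStronglyMeasurable h μ) (hm' : AEStronglyMeasurable h ν)
    {B : ℝ} (hB : 0 ≤ B) (hb : ∀ x, |h x| ≤ B) :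
    ∫ x, h x ∂μ - ∫ x, h x ∂ν ≤ 2 * B * tvDist μ ν := by
  obtain ⟨S, hS, hSle, hScle⟩ := hahn_decomposition (μ := μ) (ν := ν)
  have hintμ : Integrable h μ := (integrable_const B).mono' hm
    (Filter.Eventually.of_forall fun x => by rw [Real.norm_eq_abs]; exact hb x)
  have hintν : Integrable h ν := (integrable_const B).mono' hm'
    (Filter.Eventually.of_forall fun x => by rw [Real.norm_eq_abs]; exact hb x)
  have hres1 : ν.restrict S ≤ μ.restrict S := by
    refine Measure.le_iff.2 fun t ht => ?_
    rw [Measure.restrict_apply ht, Measure.restrict_apply ht]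
    exact hSle _ (ht.inter hS) Set.inter_subset_right
  have hres2 : μ.restrict Sᶜ ≤ ν.restrict Sᶜ := by
    refine Measure.le_iff.2 fun t ht => ?_
    rw [Measure.restrict_apply ht, Measure.restrict_apply ht]
    exact hScle _ (ht.inter hS.compl) Set.inter_subset_right
  have key1 : ∫ x in S, (B - h x) ∂ν ≤ ∫ x in S, (B - h x) ∂μ := by
    refine integral_mono_measure hres1 ?_ ?_
    · refine Filter.Eventually.of_forall fun x => ?_
      have := hb x; rw [abs_le] at this
      simp only [Pi.zero_apply]; linarith [this.2]
    · exact (integrable_const B).sub (hintμ.restrict)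
  have e1 : ∫ x in S, (B - h x) ∂μ = (μ S).toReal * B - ∫ x in S, h x ∂μ := by
    rw [integral_sub (integrable_const B) hintμ.restrict, integral_const,
      measureReal_restrict_apply_univ, measureReal_def, smul_eq_mul]
  have e1' : ∫ x in S, (B - h x) ∂ν = (ν S).toReal * B - ∫ x in S, h x ∂ν := by
    rw [integral_sub (integrable_const B) hintν.restrict, integral_const,
      measureReal_restrict_apply_univ, measureReal_def, smul_eq_mul]
  have key2 : ∫ x in Sᶜ, (h x + B) ∂μ ≤ ∫ x in Sᶜ, (h x + B) ∂ν := by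
    refine integral_mono_measure hres2 ?_ ?_
    · refine Filter.Eventually.of_forall fun x => ?_
      have := hb x; rw [abs_le] at this
      simp only [Pi.zero_apply]; linarith [this.1]
    · exact hintν.restrict.add (integrable_const B)
  have e2 : ∫ x in Sᶜ, (h x + B) ∂μ = ∫ x in Sᶜ, h x ∂μ + (μ Sᶜ).toReal * B := by
    rw [integral_add hintμ.restrict (integrable_const B), integral_const,
      measureReal_restrict_apply_univ, measureReal_def, smul_eq_mul]
  have e2' : ∫ x in Sᶜ, (h x + B) ∂ν = ∫ x in Sᶜ, h x ∂ν + (ν Sᶜ).toReal * B := by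
    rw [integral_add hintν.restrict (integrable_const B), integral_const,
      measureReal_restrict_apply_univ, measureReal_def, smul_eq_mul]
  have htv1 : |(μ S).toReal - (ν S).toReal| ≤ tvDist μ ν := abs_le_tvDist μ ν hS
  have htv2 : |(μ Sᶜ).toReal - (ν Sᶜ).toReal| ≤ tvDist μ ν := abs_le_tvDist μ ν hS.compl
  have hsplitμ : ∫ x in S, h x ∂μ + ∫ x in Sᶜ, h x ∂μ = ∫ x, h x ∂μ :=
    integral_add_compl hS hintμ
  have hsplitν : ∫ x in S, h x ∂ν + ∫ x in Sᶜ, h x ∂ν = ∫ x, h x ∂ν :=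
    integral_add_compl hS hintν
  have b1 : ∫ x in S, h x ∂μ - ∫ x in S, h x ∂ν ≤ B * tvDist μ ν := by
    have h5 : (μ S).toReal - (ν S).toReal ≤ tvDist μ ν := le_trans (le_abs_self _) htv1
    nlinarith [mul_le_mul_of_nonneg_left h5 hB]
  have b2 : ∫ x in Sᶜ, h x ∂μ - ∫ x in Sᶜ, h x ∂ν ≤ B * tvDist μ ν := by
    have h5 : (ν Sᶜ).toReal - (μ Sᶜ).toReal ≤ tvDist μ ν := by
      rw [abs_sub_comm] at htv2; exact le_trans (le_abs_self _) htv2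
    nlinarith [mul_le_mul_of_nonneg_left h5 hB]
  linarith

end TV

/-! ### Permutations -/

lemma perm_exists {N : ℕ} {i j k l : Fin N} (hij : i ≠ j) (hkl : k ≠ l) :
    ∃ σ : Equiv.Perm (Fin N), σ k = i ∧ σ l = j := by
  classical
  set τ := Equiv.swap k i with hτ
  have hτk : τ k = i := Equiv.swap_apply_left _ _
  have hne1 : τ.symm j ≠ k := by
    intro h
    apply hij
    have : j = τ k := by rw [← h, Equiv.apply_symm_apply]
    rw [this, hτk]
  refine ⟨(Equiv.swap l (τ.symm j)).trans τ, ?_, ?_⟩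
  · have hswap : Equiv.swap l (τ.symm j) k = k :=
      Equiv.swap_apply_of_ne_of_ne hkl (Ne.symm hne1)
    simp [Equiv.trans_apply, hswap, hτk]
  · have hswap : Equiv.swap l (τ.symm j) l = τ.symm j := Equiv.swap_apply_left _ _
    simp [Equiv.trans_apply, hswap]

/-! ### The kernel `Hk` and its properties -/

open Complex

/-- Abbreviation for Euclidean space. -/
abbrev Eu (d : ℕ) : Type := EuclideanSpace ℝ (Fin d)

variable {d : ℕ} {s : ℝ}

noncomputable def w (s : ℝ) (ξ : Eu d) : ℝ := (1 + ‖ξ‖ ^ 2) ^ (-s)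

lemma w_nonneg (ξ : Eu d) : 0 ≤ w s ξ := Real.rpow_nonneg (by positivity) _

lemma w_cont : Continuous (w (d := d) s) := by
  apply Continuous.rpow_const
  · fun_prop
  · intro ξ; left; positivity

lemma w_integrable (hs : (d : ℝ) / 2 < s) : Integrable (w (d := d) s) := by
  have hnr : ((Module.finrank ℝ (Eu d) : ℝ)) < 2 * s := by
    rw [finrank_euclideanSpace_fin]; linarith
  have h := integrable_rpow_neg_one_add_norm_sq (μ := (volume : Measure (Eu d))) hnr
  have h2 : -(2 * s) / 2 = -s := by ring
  rw [h2] at h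
  exact h.congr (Filter.Eventually.of_forall fun ξ => by simp [w])

noncomputable def e (x ξ : Eu d) : ℂ := Complex.exp (-Complex.I * (⟪x, ξ⟫ : ℝ))

lemma abs_e (x ξ : Eu d) : ‖e x ξ‖ = 1 := by
  simp [e, Complex.norm_exp]

lemma norm_e (x ξ : Eu d) : ‖e x ξ‖ = 1 := by
  rw [abs_e]

lemma cont_e_aux {X : Type*} [TopologicalSpace X] {u v : X → Eu d}
    (hu : Continuous u) (hv : Continuous v) : Continuous fun t => e (u t) (v t) := by
  apply Complex.continuous_exp.comp
  have h : Continuous fun t : X => (⟪u t, v t⟫ : ℝ) := hu.inner hv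
  fun_prop

lemma integrable_e_of_finite (f : Measure (Eu d)) [IsFiniteMeasure f] (ξ : Eu d) :
    Integrable (fun x => e x ξ) f := by
  refine (integrable_const (1 : ℝ)).mono' ?_ ?_
  · exact (cont_e_aux continuous_id continuous_const).aestronglyMeasurable
  · exact Filter.Eventually.of_forall fun x => by simp [abs_e, norm_e]

lemma charFn_eq (f : Measure (Eu d)) (ξ : Eu d) : charFn f ξ = ∫ x, e x ξ ∂f := rfl

lemma norm_charFn_le (f : Measure (Eu d)) [IsProbabilityMeasure f] (ξ : Eu d) :
    ‖charFn f ξ‖ ≤ 1 := by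
  rw [charFn_eq]
  calc ‖∫ x, e x ξ ∂f‖ ≤ ∫ x, ‖e x ξ‖ ∂f := norm_integral_le_integral_norm _
    _ = 1 := by simp [abs_e, norm_e]

lemma cont_charFn (f : Measure (Eu d)) [IsProbabilityMeasure f] : Continuous (charFn f) := by
  have h0 : (charFn f) = fun ξ => ∫ x, e x ξ ∂f := rfl
  rw [h0]
  refine continuous_of_dominated (F := fun ξ x => e x ξ) (bound := fun _ => (1 : ℝ))
    ?_ ?_ (integrable_const (1 : ℝ)) ?_
  · exact fun ξ => (cont_e_aux continuous_id continuous_const).aestronglyMeasurable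
  · exact fun ξ => Filter.Eventually.of_forall fun x => by simp [abs_e, norm_e]
  · exact Filter.Eventually.of_forall fun x =>
      cont_e_aux continuous_const continuous_id

variable (s) in
/-- `g x ξ = e^{-i⟨x,ξ⟩} - f̂(ξ)`. -/
noncomputable def g (f : Measure (Eu d)) (x ξ : Eu d) : ℂ := e x ξ - charFn f ξ

variable (f : Measure (Eu d)) [IsProbabilityMeasure f]

lemma norm_g_le (x ξ : Eu d) : ‖g f x ξ‖ ≤ 2 := by
  calc ‖g f x ξ‖ ≤ ‖e x ξ‖ + ‖charFn f ξ‖ := norm_sub_le _ _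
    _ ≤ 2 := by rw [norm_e]; linarith [norm_charFn_le f ξ]

lemma cont_g_aux {X : Type*} [TopologicalSpace X] {u v : X → Eu d}
    (hu : Continuous u) (hv : Continuous v) :
    Continuous fun t => g f (u t) (v t) :=
  (cont_e_aux hu hv).sub ((cont_charFn f).comp hv)

variable (s) in
noncomputable def φ (x y ξ : Eu d) : ℝ :=
  w s ξ * (g f x ξ * (starRingEnd ℂ) (g f y ξ)).re

lemma abs_φ_le (x y ξ : Eu d) : |φ s f x y ξ| ≤ 4 * w s ξ := by
  have h1 : |(g f x ξ * (starRingEnd ℂ) (g f y ξ)).re| ≤ 4 := by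
    refine le_trans (Complex.abs_re_le_norm _) ?_
    rw [norm_mul, RCLike.norm_conj]
    calc ‖g f x ξ‖ * ‖g f y ξ‖ ≤ 2 * 2 := by
          exact mul_le_mul (norm_g_le f x ξ) (norm_g_le f y ξ) (norm_nonneg _) (by norm_num)
      _ = 4 := by norm_num
  rw [φ, _root_.abs_mul, _root_.abs_of_nonneg (w_nonneg ξ)]
  calc w s ξ * |(g f x ξ * (starRingEnd ℂ) (g f y ξ)).re| ≤ w s ξ * 4 :=
        mul_le_mul_of_nonneg_left h1 (w_nonneg ξ)
    _ = 4 * w s ξ := by ring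

lemma cont_φ_aux {X : Type*} [TopologicalSpace X] {u v t' : X → Eu d}
    (hu : Continuous u) (hv : Continuous v) (ht : Continuous t') :
    Continuous fun t => φ s f (u t) (v t) (t' t) := by
  apply Continuous.mul (w_cont.comp ht)
  exact Complex.continuous_re.comp
    ((cont_g_aux f hu ht).mul (Complex.continuous_conj.comp (cont_g_aux f hv ht)))

lemma φ_integrable (hs : (d : ℝ) / 2 < s) (x y : Eu d) : Integrable (φ s f x y) := by
  refine ((w_integrable hs).const_mul 4).mono'
    (cont_φ_aux f continuous_const continuous_const continuous_id).aestronglyMeasurable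
    (Filter.Eventually.of_forall fun ξ => ?_)
  simpa using abs_φ_le f x y ξ

variable (s) in
noncomputable def Hk (x y : Eu d) : ℝ := ∫ ξ, φ s f x y ξ

variable (d s) in
noncomputable def Mconst : ℝ := ∫ ξ : EuclideanSpace ℝ (Fin d), w s ξ

lemma Mconst_nonneg : 0 ≤ Mconst d s := integral_nonneg w_nonneg

lemma abs_Hk_le (hs : (d : ℝ) / 2 < s) (x y : Eu d) : |Hk s f x y| ≤ 4 * Mconst d s := by
  have h := norm_integral_le_of_norm_le (f := φ s f x y) ((w_integrable hs).const_mul 4)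
    (Filter.Eventually.of_forall fun ξ => by simpa using abs_φ_le f x y ξ)
  rw [Real.norm_eq_abs] at h
  calc |Hk s f x y| ≤ ∫ ξ, 4 * w s ξ := h
    _ = 4 * Mconst d s := by rw [integral_const_mul]; rfl

lemma cont_Hk_aux (hs : (d : ℝ) / 2 < s) {X : Type*} [TopologicalSpace X]
    [FirstCountableTopology X] {u v : X → Eu d}
    (hu : Continuous u) (hv : Continuous v) :
    Continuous fun t => Hk s f (u t) (v t) := by
  refine continuous_of_dominated (F := fun t ξ => φ s f (u t) (v t) ξ)
    (bound := fun ξ => 4 * w s ξ) ?_ ?_ ((w_integrable hs).const_mul 4) ?_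
  · exact fun t => (cont_φ_aux f continuous_const continuous_const
      continuous_id).aestronglyMeasurable
  · exact fun t => Filter.Eventually.of_forall fun ξ => by simpa using abs_φ_le f (u t) (v t) ξ
  · exact Filter.Eventually.of_forall fun ξ =>
      cont_φ_aux f hu hv continuous_const

/-! ### Vanishing against `f ⊗ f` -/

lemma g_int_zero (ξ : Eu d) : ∫ x, g f x ξ ∂f = 0 := by
  have h : ∫ x, g f x ξ ∂f = (∫ x, e x ξ ∂f) - ∫ _x, charFn f ξ ∂f :=
    integral_sub (integrable_e_of_finite f ξ) (integrable_const _)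
  rw [h, ← charFn_eq f ξ, integral_const]
  simp

lemma bound_int (hs : (d : ℝ) / 2 < s) :
    Integrable (fun q : Eu d × Eu d => 4 * w s q.2) (f.prod volume) := by
  refine (integrable_prod_iff' ?_).2 ⟨?_, ?_⟩
  · exact (continuous_const.mul (w_cont.comp continuous_snd)).aestronglyMeasurable
  · exact Filter.Eventually.of_forall fun ξ => integrable_const (4 * w s ξ)
  · have h : (fun ξ : Eu d => ∫ _x, ‖4 * w s ξ‖ ∂f) = fun ξ : Eu d => ‖4 * w s ξ‖ := by
      funext ξ; rw [integral_const]; simp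
    rw [h]
    exact ((w_integrable hs).const_mul 4).norm

lemma int_φ_prod (hs : (d : ℝ) / 2 < s) (x : Eu d) :
    Integrable (fun q : Eu d × Eu d => φ s f x q.1 q.2) (f.prod volume) := by
  refine (bound_int f hs).mono'
    (cont_φ_aux f continuous_const continuous_fst continuous_snd).aestronglyMeasurable
    (Filter.Eventually.of_forall fun q => ?_)
  simpa using abs_φ_le f x q.1 q.2

lemma inner_y_zero (x ξ : Eu d) : ∫ y, φ s f x y ξ ∂f = 0 := by
  have hg0 : ∫ y, g f y ξ ∂f = 0 := g_int_zero f ξ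
  have hint : Integrable (fun y => g f x ξ * (starRingEnd ℂ) (g f y ξ)) f := by
    refine (integrable_const ((4 : ℝ))).mono'
      ((continuous_const.mul (Complex.continuous_conj.comp
        (cont_g_aux f continuous_id continuous_const))).aestronglyMeasurable) ?_
    refine Filter.Eventually.of_forall fun y => ?_
    rw [norm_mul, RCLike.norm_conj]
    calc ‖g f x ξ‖ * ‖g f y ξ‖ ≤ 2 * 2 :=
        mul_le_mul (norm_g_le f x ξ) (norm_g_le f y ξ) (norm_nonneg _) (by norm_num)
      _ ≤ 4 := by norm_num
  have h2 := integral_re (μ := f) (𝕜 := ℂ) hint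
  simp only [RCLike.re_to_complex] at h2
  calc ∫ y, φ s f x y ξ ∂f
      = w s ξ * ∫ y, (g f x ξ * (starRingEnd ℂ) (g f y ξ)).re ∂f := by
        rw [← integral_const_mul]; rfl
    _ = w s ξ * (∫ y, g f x ξ * (starRingEnd ℂ) (g f y ξ) ∂f).re := by rw [h2]
    _ = 0 := by rw [integral_const_mul, integral_conj, hg0]; simp

lemma Hk_y_zero (hs : (d : ℝ) / 2 < s) (x : Eu d) : ∫ y, Hk s f x y ∂f = 0 := by
  have hswap := integral_integral_swap (f := fun y ξ => φ s f x y ξ)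
    (μ := f) (ν := volume) (int_φ_prod f hs x)
  calc ∫ y, Hk s f x y ∂f = ∫ y, (∫ ξ, φ s f x y ξ) ∂f := rfl
    _ = ∫ ξ, (∫ y, φ s f x y ξ ∂f) := hswap
    _ = 0 := by simp [inner_y_zero f]

lemma Hk_integrable (hs : (d : ℝ) / 2 < s) (μ : Measure (Eu d × Eu d)) [IsFiniteMeasure μ] :
    Integrable (fun p : Eu d × Eu d => Hk s f p.1 p.2) μ := by
  refine (integrable_const (4 * Mconst d s)).mono'
    (cont_Hk_aux f hs continuous_fst continuous_snd).aestronglyMeasurable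
    (Filter.Eventually.of_forall fun p => ?_)
  rw [Real.norm_eq_abs]
  exact abs_Hk_le f hs p.1 p.2

lemma Hk_prod_zero (hs : (d : ℝ) / 2 < s) : ∫ p, Hk s f p.1 p.2 ∂(f.prod f) = 0 := by
  rw [integral_prod _ (Hk_integrable f hs (f.prod f))]
  calc ∫ x, ∫ y, Hk s f x y ∂f ∂f = ∫ _x, (0 : ℝ) ∂f := by
        refine integral_congr_ae (Filter.Eventually.of_forall fun x => ?_)
        exact Hk_y_zero f hs x
    _ = 0 := integral_zero _ _

/-! ### Expansion of the empirical `H^{-s}` norm -/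

lemma hneg_expand (hs : (d : ℝ) / 2 < s) {N : ℕ} (hN : 0 < N) (V : Fin N → Eu d) :
    HnegSq s (empMeas V) f
      = ((N : ℝ)⁻¹) ^ 2 * ∑ i, ∑ j, Hk s f (V i) (V j) := by
  have hNR : ((N : ℝ)) ≠ 0 := Nat.cast_ne_zero.2 hN.ne'
  have hNC : ((N : ℂ)) ≠ 0 := Nat.cast_ne_zero.2 hN.ne'
  have hemp : ∀ ξ : Eu d, charFn (empMeas V) ξ = (N : ℝ)⁻¹ • ∑ i, e (V i) ξ := by
    intro ξ
    have h1 : charFn (empMeas V) ξ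
        = ∫ x, e x ξ ∂(((N : ℝ≥0∞))⁻¹ • ∑ i, Measure.dirac (V i)) := rfl
    rw [h1, integral_smul_measure,
      integral_finset_sum_measure (fun i _ => integrable_e_of_finite _ ξ)]
    have h2 : ∀ i : Fin N, ∫ x, e x ξ ∂(Measure.dirac (V i)) = e (V i) ξ := fun i =>
      integral_dirac' _ _ ((cont_e_aux continuous_id continuous_const).stronglyMeasurable)
    rw [Finset.sum_congr rfl fun i _ => h2 i]
    congr 1
    simp [ENNReal.toReal_inv]
  have hchar : ∀ ξ : Eu d, charFn (empMeas V) ξ - charFn f ξ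
      = (((N : ℝ)⁻¹ : ℝ) : ℂ) * ∑ i, g f (V i) ξ := by
    intro ξ
    rw [hemp ξ]
    have h3 : ∑ i, g f (V i) ξ = (∑ i, e (V i) ξ) - (N : ℂ) * charFn f ξ := by
      simp only [g, Finset.sum_sub_distrib, Finset.sum_const, Finset.card_univ,
        Fintype.card_fin, nsmul_eq_mul]
    rw [h3, Complex.real_smul]
    push_cast
    field_simp
  have key : ∀ ξ : Eu d, w s ξ * ‖charFn (empMeas V) ξ - charFn f ξ‖ ^ 2
      = ((N : ℝ)⁻¹) ^ 2 * ∑ i, ∑ j, φ s f (V i) (V j) ξ := by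
    intro ξ
    have zsq : ∀ z : ℂ, ‖z‖ ^ 2 = (z * (starRingEnd ℂ) z).re := fun z => by
      rw [Complex.mul_conj]; simp [Complex.normSq_eq_norm_sq, ← Complex.ofReal_pow]
    rw [hchar ξ, norm_mul, mul_pow]
    have hnc : ‖(((N : ℝ)⁻¹ : ℝ) : ℂ)‖ = (N : ℝ)⁻¹ := by
      rw [Complex.norm_real, Real.norm_eq_abs, _root_.abs_of_nonneg (by positivity)]
    rw [hnc, zsq]
    rw [map_sum, Finset.sum_mul_sum]
    simp only [Complex.re_sum]
    have hdist : w s ξ * ∑ i, ∑ j, (g f (V i) ξ * (starRingEnd ℂ) (g f (V j) ξ)).re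
        = ∑ i, ∑ j, w s ξ * (g f (V i) ξ * (starRingEnd ℂ) (g f (V j) ξ)).re := by
      rw [Finset.mul_sum]
      exact Finset.sum_congr rfl fun i _ => Finset.mul_sum _ _ _
    calc w s ξ * (((N : ℝ)⁻¹) ^ 2
            * ∑ i, ∑ j, (g f (V i) ξ * (starRingEnd ℂ) (g f (V j) ξ)).re)
        = ((N : ℝ)⁻¹) ^ 2 * (w s ξ
            * ∑ i, ∑ j, (g f (V i) ξ * (starRingEnd ℂ) (g f (V j) ξ)).re) := by ring
      _ = ((N : ℝ)⁻¹) ^ 2 * ∑ i, ∑ j, φ s f (V i) (V j) ξ := by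
          rw [hdist]; rfl
  calc HnegSq s (empMeas V) f
      = ∫ ξ, w s ξ * ‖charFn (empMeas V) ξ - charFn f ξ‖ ^ 2 := rfl
    _ = ∫ ξ, ((N : ℝ)⁻¹) ^ 2 * ∑ i, ∑ j, φ s f (V i) (V j) ξ :=
        integral_congr_ae (Filter.Eventually.of_forall key)
    _ = ((N : ℝ)⁻¹) ^ 2 * ∫ ξ, ∑ i, ∑ j, φ s f (V i) (V j) ξ := integral_const_mul _ _
    _ = ((N : ℝ)⁻¹) ^ 2 * ∑ i, ∑ j, Hk s f (V i) (V j) := by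
        rw [integral_finset_sum _
          (fun i _ => integrable_finset_sum _ fun j _ => φ_integrable f hs _ _)]
        exact congrArg _ (Finset.sum_congr rfl fun i _ =>
          integral_finset_sum _ fun j _ => φ_integrable f hs _ _)

/-! ### Symmetry -/

lemma integral_pair_eq (hs : (d : ℝ) / 2 < s) {N : ℕ}
    (G : Measure (Fin N → Eu d)) [IsProbabilityMeasure G]
    (hsym : ∀ σ : Equiv.Perm (Fin N),
      Measure.map (fun V : Fin N → Eu d => fun i => V (σ i)) G = G)
    {i j k l : Fin N} (hij : i ≠ j) (hkl : k ≠ l) :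
    ∫ V, Hk s f (V i) (V j) ∂G = ∫ V, Hk s f (V k) (V l) ∂G := by
  obtain ⟨σ, hk, hl⟩ := perm_exists hij hkl
  have hmeas : Measurable fun (V : Fin N → Eu d) (m : Fin N) => V (σ m) :=
    measurable_pi_lambda _ fun m => measurable_pi_apply _
  have haesm : AEStronglyMeasurable (fun V : Fin N → Eu d => Hk s f (V k) (V l))
      (Measure.map (fun V : Fin N → Eu d => fun m => V (σ m)) G) :=
    (cont_Hk_aux f hs (continuous_apply k) (continuous_apply l)).aestronglyMeasurable
  have h1 : ∫ V, Hk s f (V k) (V l)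
        ∂(Measure.map (fun V : Fin N → Eu d => fun m => V (σ m)) G)
      = ∫ V, Hk s f (V (σ k)) (V (σ l)) ∂G :=
    integral_map hmeas.aemeasurable haesm
  have h2 : ∫ V, Hk s f (V k) (V l) ∂G = ∫ V, Hk s f (V (σ k)) (V (σ l)) ∂G := by
    rw [← h1, hsym σ]
  rw [h2, hk, hl]

end EmpAux

/-- For a symmetric probability measure `G^N` on `(ℝ^d)^N`, the expected
squared `H^{-s}` distance (`s > d/2`) of the empirical measure to `f` is
controlled by the two-particle marginal:
`E[‖μ^N_Z - f‖²_{H^{-s}}] ≤ C_s ‖G^N_2 - f^{⊗2}‖ + C_s/N`. -/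
theorem empirical_Hneg_controlled_by_second_marginal
    {d : ℕ} (s : ℝ) (hs : (d : ℝ) / 2 < s)
    (f : Measure (EuclideanSpace ℝ (Fin d))) [IsProbabilityMeasure f]
    (hmom : Integrable (fun x => ‖x‖ ^ 2) f) :
    ∃ C : ℝ, 0 < C ∧ ∀ N : ℕ, (hN : 2 ≤ N) →
      ∀ G : Measure (Fin N → EuclideanSpace ℝ (Fin d)),
        IsProbabilityMeasure G →
        (∀ σ : Equiv.Perm (Fin N),
          Measure.map (fun V : Fin N → EuclideanSpace ℝ (Fin d) =>
            fun i => V (σ i)) G = G) →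
        (∫ V, HnegSq s (empMeas V) f ∂G)
          ≤ C * tvDist
              (Measure.map (fun V : Fin N → EuclideanSpace ℝ (Fin d) =>
                (V ⟨0, by omega⟩, V ⟨1, by omega⟩)) G)
              (f.prod f)
            + C / N := by
  classical
  have hM0 : 0 ≤ EmpAux.Mconst d s := EmpAux.Mconst_nonneg
  refine ⟨8 * EmpAux.Mconst d s + 4, by linarith, ?_⟩
  intro N hN G hG hsym
  haveI := hG
  have hNpos : 0 < N := by omega
  set M := EmpAux.Mconst d s with hMdef
  let i0 : Fin N := ⟨0, by omega⟩
  let i1 : Fin N := ⟨1, by omega⟩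
  have hi01 : i0 ≠ i1 := by
    intro h
    have := congrArg Fin.val h
    simp [i0, i1] at this
  have hpm : Measurable fun V : Fin N → EuclideanSpace ℝ (Fin d) => (V i0, V i1) :=
    (measurable_pi_apply _).prodMk (measurable_pi_apply _)
  haveI hT2p : IsProbabilityMeasure
      (Measure.map (fun V : Fin N → EuclideanSpace ℝ (Fin d) => (V i0, V i1)) G) :=
    Measure.isProbabilityMeasure_map hpm.aemeasurable
  set T2 : Measure (EuclideanSpace ℝ (Fin d) × EuclideanSpace ℝ (Fin d)) :=
    Measure.map (fun V : Fin N → EuclideanSpace ℝ (Fin d) => (V i0, V i1)) G with hT2def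
  set tv : ℝ := tvDist T2 (f.prod f) with htvdef
  have htv0 : 0 ≤ tv := EmpAux.tvDist_nonneg' _ _
  -- the common off-diagonal value
  have hmap : ∫ p, EmpAux.Hk s f p.1 p.2 ∂T2 = ∫ V, EmpAux.Hk s f (V i0) (V i1) ∂G :=
    integral_map hpm.aemeasurable
      (EmpAux.cont_Hk_aux f hs continuous_fst continuous_snd).aestronglyMeasurable
  have hoff : ∀ i j : Fin N, i ≠ j →
      ∫ V, EmpAux.Hk s f (V i) (V j) ∂G = ∫ p, EmpAux.Hk s f p.1 p.2 ∂T2 := by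
    intro i j hij
    rw [hmap]
    exact EmpAux.integral_pair_eq f hs G hsym hij hi01
  -- bound on the off-diagonal value via TV distance
  have hT : ∫ p, EmpAux.Hk s f p.1 p.2 ∂T2 ≤ 8 * M * tv := by
    have h0 : ∫ p, EmpAux.Hk s f p.1 p.2 ∂(f.prod f) = 0 := EmpAux.Hk_prod_zero f hs
    have h1 := EmpAux.integral_diff_le_tvDist T2 (f.prod f)
      (fun p => EmpAux.Hk s f p.1 p.2)
      (EmpAux.cont_Hk_aux f hs continuous_fst continuous_snd).aestronglyMeasurable
      (EmpAux.cont_Hk_aux f hs continuous_fst continuous_snd).aestronglyMeasurable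
      (B := 4 * M) (by linarith) (fun p => EmpAux.abs_Hk_le f hs p.1 p.2)
    rw [h0] at h1
    calc ∫ p, EmpAux.Hk s f p.1 p.2 ∂T2
        = ∫ p, EmpAux.Hk s f p.1 p.2 ∂T2 - 0 := by ring
      _ ≤ 2 * (4 * M) * tv := h1
      _ = 8 * M * tv := by ring
  -- integrability of each term
  have hGint : ∀ i j : Fin N, Integrable (fun V => EmpAux.Hk s f (V i) (V j)) G := by
    intro i j
    refine (integrable_const (4 * M)).mono'
      (EmpAux.cont_Hk_aux f hs (continuous_apply i) (continuous_apply j)).aestronglyMeasurable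
      (Filter.Eventually.of_forall fun V => ?_)
    rw [Real.norm_eq_abs]
    exact EmpAux.abs_Hk_le f hs (V i) (V j)
  -- diagonal bound
  have hdiag : ∀ i : Fin N, ∫ V, EmpAux.Hk s f (V i) (V i) ∂G ≤ 4 * M := by
    intro i
    calc ∫ V, EmpAux.Hk s f (V i) (V i) ∂G ≤ ∫ _V, (4 * M : ℝ) ∂G := by
          refine integral_mono (hGint i i) (integrable_const _) fun V => ?_
          exact le_trans (le_abs_self _) (EmpAux.abs_Hk_le f hs (V i) (V i))
      _ = 4 * M := by simp
  -- main expansion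
  have hmain : ∫ V, HnegSq s (empMeas V) f ∂G
      = ((N : ℝ)⁻¹) ^ 2 * ∑ i, ∑ j, ∫ V, EmpAux.Hk s f (V i) (V j) ∂G := by
    calc ∫ V, HnegSq s (empMeas V) f ∂G
        = ∫ V, (((N : ℝ)⁻¹) ^ 2 * ∑ i, ∑ j, EmpAux.Hk s f (V i) (V j)) ∂G :=
          integral_congr_ae (Filter.Eventually.of_forall fun V =>
            EmpAux.hneg_expand f hs hNpos V)
      _ = ((N : ℝ)⁻¹) ^ 2 * ∫ V, (∑ i, ∑ j, EmpAux.Hk s f (V i) (V j)) ∂G :=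
          integral_const_mul _ _
      _ = ((N : ℝ)⁻¹) ^ 2 * ∑ i, ∑ j, ∫ V, EmpAux.Hk s f (V i) (V j) ∂G := by
          rw [integral_finset_sum _
            (fun i _ => integrable_finset_sum _ fun j _ => hGint i j)]
          exact congrArg _ (Finset.sum_congr rfl fun i _ =>
            integral_finset_sum _ fun j _ => hGint i j)
  -- termwise bound and summation
  have hterm : ∀ i j : Fin N, ∫ V, EmpAux.Hk s f (V i) (V j) ∂G
      ≤ if i = j then 4 * M else 8 * M * tv := by
    intro i j
    by_cases hij : i = j
    · subst hij; simpa using hdiag i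
    · rw [if_neg hij, hoff i j hij]
      exact hT
  have hsum : ∑ i, ∑ j, ∫ V, EmpAux.Hk s f (V i) (V j) ∂G
      ≤ (N : ℝ) * ((N : ℝ) * (8 * M * tv) + (4 * M - 8 * M * tv)) := by
    calc ∑ i, ∑ j, ∫ V, EmpAux.Hk s f (V i) (V j) ∂G
        ≤ ∑ i : Fin N, ∑ j : Fin N, (if i = j then 4 * M else 8 * M * tv) :=
          Finset.sum_le_sum fun i _ => Finset.sum_le_sum fun j _ => hterm i j
      _ = ∑ _i : Fin N, ((N : ℝ) * (8 * M * tv) + (4 * M - 8 * M * tv)) := by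
          refine Finset.sum_congr rfl fun i _ => ?_
          have hsplit : ∀ j : Fin N, (if i = j then 4 * M else 8 * M * tv)
              = 8 * M * tv + (if i = j then (4 * M - 8 * M * tv) else 0) := by
            intro j; by_cases h : i = j <;> simp [h]
          rw [Finset.sum_congr rfl fun j _ => hsplit j, Finset.sum_add_distrib,
            Finset.sum_const, Finset.card_univ, Fintype.card_fin, nsmul_eq_mul,
            Finset.sum_ite_eq]
          simp
      _ = (N : ℝ) * ((N : ℝ) * (8 * M * tv) + (4 * M - 8 * M * tv)) := by
          rw [Finset.sum_const, Finset.card_univ, Fintype.card_fin, nsmul_eq_mul]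
  have hNR : (0 : ℝ) < (N : ℝ) := by exact_mod_cast hNpos
  have hu0 : (0 : ℝ) ≤ ((N : ℝ))⁻¹ := by positivity
  have hfinal : ((N : ℝ)⁻¹) ^ 2 * ((N : ℝ) * ((N : ℝ) * (8 * M * tv) + (4 * M - 8 * M * tv)))
      = 8 * M * tv + (4 * M - 8 * M * tv) * (N : ℝ)⁻¹ := by
    field_simp
  calc ∫ V, HnegSq s (empMeas V) f ∂G
      = ((N : ℝ)⁻¹) ^ 2 * ∑ i, ∑ j, ∫ V, EmpAux.Hk s f (V i) (V j) ∂G := hmain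
    _ ≤ ((N : ℝ)⁻¹) ^ 2 * ((N : ℝ) * ((N : ℝ) * (8 * M * tv) + (4 * M - 8 * M * tv))) :=
        mul_le_mul_of_nonneg_left hsum (by positivity)
    _ = 8 * M * tv + (4 * M - 8 * M * tv) * (N : ℝ)⁻¹ := hfinal
    _ ≤ (8 * M + 4) * tv + (8 * M + 4) / (N : ℝ) := by
        rw [div_eq_mul_inv]
        nlinarith [mul_nonneg hM0 htv0, mul_nonneg hM0 hu0, mul_nonneg htv0 hu0,
          mul_nonneg (mul_nonneg hM0 htv0) hu0]
end
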